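/- arXiv:2301.09619 — 2 statements merged into one kernel-verified Lean document; each statement's English description precedes it below -/
import Mathlib

section
/- Let Γ be an arbitrary finite normal-form game with N players and influence bound δ. If every player's exploration rate satisfies T_k > δ(N − 1), then Γ has a unique Quantal Response Equilibrium x̄ with exploration rates (T_k), and every interior solution x(t) of the smooth Q-Learning dynamics converges to x̄ as t → ∞. -/
/-
STATEMENT 0: Let Γ be an arbitrary finite normal-form game with N players and
influence bound δ. If every player's exploration rate satisfies T_k > δ(N − 1),
then Γ has a unique Quantal Response Equilibrium x̄ with exploration rates (T_k),
and every interior solution x(t) of the smooth Q-Learning dynamics converges to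
x̄ as t → ∞.
-/

open Filter Topology

noncomputable section

/-- Joint strategy space: a mixed strategy for each of the `N` players. -/
abbrev Strat {N : ℕ} (n : Fin N → ℕ) := ∀ k, Fin (n k) → ℝ

/-- `x` lies in the product of standard simplices `Δ = Δ₁ × ⋯ × Δ_N`. -/
def JointSimplex {N : ℕ} {n : Fin N → ℕ} (x : Strat n) : Prop :=
  ∀ k, x k ∈ stdSimplex ℝ (Fin (n k))

/-- `x` lies in the interior of `Δ` (all components positive). -/
def JointInterior {N : ℕ} {n : Fin N → ℕ} (x : Strat n) : Prop :=
  ∀ k, (∀ i, 0 < x k i) ∧ ∑ i, x k i = 1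

/-- Quantal Response Equilibrium for reward functions `r` and exploration rates `T`. -/
def IsQRE {N : ℕ} {n : Fin N → ℕ} (r : Strat n → Strat n) (T : Fin N → ℝ) (x : Strat n) : Prop :=
  JointSimplex x ∧
    ∀ k i, x k i = Real.exp (r x k i / T k) / ∑ j, Real.exp (r x k j / T k)

/-- An interior solution of the smooth Q-Learning dynamics
`ẋ_{ki}/x_{ki} = r_{ki}(x) − ⟨x_k, r_k(x)⟩ − T_k (ln x_{ki} − ⟨x_k, ln x_k⟩)`. -/
def QLSolution {N : ℕ} {n : Fin N → ℕ} (r : Strat n → Strat n) (T : Fin N → ℝ)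
    (x : ℝ → Strat n) : Prop :=
  (∀ t, JointInterior (x t)) ∧
    ∀ t k i, HasDerivAt (fun s => x s k i)
      (x t k i * (r (x t) k i - (∑ j, x t k j * r (x t) k j)
        - T k * (Real.log (x t k i) - ∑ j, x t k j * Real.log (x t k j)))) t

/-- The multilinear (expected) reward of action `i` of player `k` in a finite
normal-form game with pure rewards `rPure` (a function of the opponents' pure profile). -/
def mixedReward {N : ℕ} {n : Fin N → ℕ}
    (rPure : ∀ k : Fin N, Fin (n k) → (∀ l : {l : Fin N // l ≠ k}, Fin (n l.1)) → ℝ) :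
    Strat n → Strat n :=
  fun x k i => ∑ s : ∀ l : {l : Fin N // l ≠ k}, Fin (n l.1),
    (∏ l, x l.1 (s l)) * rPure k i s

namespace QREproof

/-- Midrange trick: inner product with a zero-sum vector is bounded by half the
oscillation times the ℓ1 norm. -/
lemma abs_sum_mul_le_half_osc {m : Type*} [Fintype m] [Nonempty m]
    (v g : m → ℝ) (hv : ∑ i, v i = 0) (c : ℝ)
    (hg : ∀ i j, |g i - g j| ≤ c) :
    |∑ i, v i * g i| ≤ c / 2 * ∑ i, |v i| := by
  classical
  obtain ⟨i0, -, hi0⟩ := Finset.exists_mem_eq_sup' (Finset.univ_nonempty (α := m)) g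
  obtain ⟨i1, -, hi1⟩ := Finset.exists_mem_eq_inf' (Finset.univ_nonempty (α := m)) g
  set M : ℝ := (g i0 + g i1) / 2 with hM
  have hbound : ∀ i, |g i - M| ≤ c / 2 := by
    intro i
    have h1 : g i ≤ g i0 := hi0 ▸ Finset.le_sup' g (Finset.mem_univ i)
    have h2 : g i1 ≤ g i := hi1 ▸ Finset.inf'_le g (Finset.mem_univ i)
    have h3 : g i0 - g i1 ≤ c := le_trans (le_abs_self _) (hg i0 i1)
    rw [abs_le]; constructor <;> [skip; skip] <;> simp only [hM] <;> linarith
  have : ∑ i, v i * g i = ∑ i, v i * (g i - M) := by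
    rw [← sub_eq_zero]
    rw [← Finset.sum_sub_distrib]
    have : ∀ i ∈ Finset.univ, v i * g i - v i * (g i - M) = M * v i := by
      intro i _; ring
    rw [Finset.sum_congr rfl this, ← Finset.mul_sum, hv, mul_zero]
  rw [this]
  calc |∑ i, v i * (g i - M)| ≤ ∑ i, |v i * (g i - M)| := Finset.abs_sum_le_sum_abs _ _
    _ ≤ ∑ i, |v i| * (c / 2) := by
        apply Finset.sum_le_sum
        intro i _
        rw [abs_mul]
        exact mul_le_mul_of_nonneg_left (hbound i) (abs_nonneg _)
    _ = c / 2 * ∑ i, |v i| := by rw [← Finset.sum_mul]; ring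

/-- `2(e^y - 1) ≤ y(e^y + 1)` for `y ≥ 0`  (equivalently `tanh(y/2) ≤ y/2`). -/
lemma key1 {y : ℝ} (hy : 0 ≤ y) : 2 * (Real.exp y - 1) ≤ y * (Real.exp y + 1) := by
  have h : ∀ z : ℝ, 0 ≤ z → 0 ≤ (z - 1) * Real.exp z + 1 := by
    intro z hz
    have hF : ∀ w : ℝ, HasDerivAt (fun u => (u - 1) * Real.exp u + 1) (w * Real.exp w) w := by
      intro w
      have := ((hasDerivAt_id w).sub_const 1).mul (Real.hasDerivAt_exp w)
      have h2 := this.add_const 1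
      exact h2.congr_deriv (by simp only [id_eq]; ring)
    have mono : MonotoneOn (fun u => (u - 1) * Real.exp u + 1) (Set.Ici 0) := by
      apply monotoneOn_of_deriv_nonneg (convex_Ici 0)
      · exact (Continuous.continuousOn (by continuity))
      · intro w _
        exact (hF w).differentiableAt.differentiableWithinAt
      · intro w hw
        rw [(hF w).deriv]
        simp only [Set.mem_Ioi, interior_Ici, Set.mem_Ioi] at hw
        positivity
    have := mono (Set.self_mem_Ici) (Set.mem_Ici.2 hz) hz
    simpa using this
  -- F y = y*(e^y+1) - 2*(e^y - 1), F' y = (y-1)e^y + 1 ≥ 0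
  have hF : ∀ w : ℝ, HasDerivAt (fun u => u * (Real.exp u + 1) - 2 * (Real.exp u - 1))
      ((w - 1) * Real.exp w + 1) w := by
    intro w
    have h1 := (hasDerivAt_id w).mul ((Real.hasDerivAt_exp w).add_const 1)
    have h2 := ((Real.hasDerivAt_exp w).sub_const 1).const_mul 2
    have := h1.sub h2
    exact this.congr_deriv (by simp only [id_eq]; ring)
  have mono : MonotoneOn (fun u => u * (Real.exp u + 1) - 2 * (Real.exp u - 1)) (Set.Ici 0) := by
    apply monotoneOn_of_deriv_nonneg (convex_Ici 0)
    · exact (Continuous.continuousOn (by continuity))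
    · intro w _
      exact (hF w).differentiableAt.differentiableWithinAt
    · intro w hw
      rw [(hF w).deriv]
      exact h w (le_of_lt (by simpa [interior_Ici] using hw))
  have := mono (Set.self_mem_Ici) (Set.mem_Ici.2 hy) hy
  simp only [Real.exp_zero] at this
  linarith

/-- `2y ≤ e^y - e^{-y}` for `y ≥ 0` (i.e. `y ≤ sinh y`). -/
lemma key2 {y : ℝ} (hy : 0 ≤ y) : 2 * y ≤ Real.exp y - Real.exp (-y) := by
  rcases eq_or_lt_of_le hy with h | h
  · simp [← h]
  · have := (Real.self_lt_sinh_iff.2 h).le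
    rw [Real.sinh_eq] at this
    linarith

/-- Log-mean vs arithmetic mean: for `0 < q ≤ p`,
`2(p - q) ≤ (log p - log q)(p + q)`. -/
lemma logmean {p q : ℝ} (hq : 0 < q) (hpq : q ≤ p) :
    2 * (p - q) ≤ (Real.log p - Real.log q) * (p + q) := by
  have hp : 0 < p := lt_of_lt_of_le hq hpq
  set y := Real.log p - Real.log q with hy
  have hy0 : 0 ≤ y := by
    rw [hy, sub_nonneg]
    exact Real.log_le_log hq hpq
  have hexp : Real.exp y = p / q := by
    rw [hy, Real.exp_sub, Real.exp_log hp, Real.exp_log hq]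
  have := key1 hy0
  rw [hexp] at this
  have h2 : 2 * (p / q - 1) ≤ y * (p / q + 1) := this
  have := mul_le_mul_of_nonneg_right h2 hq.le
  calc 2 * (p - q) = (2 * (p / q - 1)) * q := by field_simp
    _ ≤ (y * (p / q + 1)) * q := this
    _ = y * (p + q) := by field_simp

/-- coordinate of a nonnegative vector summing to 1 is at most 1 -/
lemma coord_le_one {m : Type*} [Fintype m] (p : m → ℝ) (hp : ∀ i, 0 ≤ p i)
    (hp1 : ∑ i, p i = 1) (i : m) : p i ≤ 1 := by
  rw [← hp1]
  exact Finset.single_le_sum (fun j _ => hp j) (Finset.mem_univ i)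

/-- Bregman (entropy) lower bound: for `p, q ∈ (0,1]`,
`(q-p)²/2 ≤ p(log p - log q) + q - p`. -/
lemma bregman {p q : ℝ} (hp : 0 < p) (hp1 : p ≤ 1) (hq : 0 < q) (hq1 : q ≤ 1) :
    (q - p) ^ 2 / 2 ≤ p * (Real.log p - Real.log q) + q - p := by
  rcases le_total q p with h | h
  · -- q ≤ p
    have hl := logmean hq h
    have h1 : 2 * (p - q) / (p + q) ≤ Real.log p - Real.log q := by
      rw [div_le_iff₀ (by positivity)]
      linarith
    have h2 : p * (2 * (p - q) / (p + q)) ≤ p * (Real.log p - Real.log q) :=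
      mul_le_mul_of_nonneg_left h1 hp.le
    have key : p * (2 * (p - q) / (p + q)) + q - p = (q - p) ^ 2 / (p + q) := by
      field_simp
      ring
    have h4 : (q - p) ^ 2 / 2 ≤ (q - p) ^ 2 / (p + q) := by
      apply div_le_div_of_nonneg_left (by positivity) (by positivity)
      linarith
    linarith
  · -- p ≤ q
    have hl := key2 (y := Real.log q - Real.log p)
      (by rw [sub_nonneg]; exact Real.log_le_log hp h)
    have hexp1 : Real.exp (Real.log q - Real.log p) = q / p := by
      rw [Real.exp_sub, Real.exp_log hq, Real.exp_log hp]
    have hexp2 : Real.exp (-(Real.log q - Real.log p)) = p / q := by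
      rw [neg_sub, Real.exp_sub, Real.exp_log hq, Real.exp_log hp]
    rw [hexp1, hexp2] at hl
    -- 2(log q - log p) ≤ q/p - p/q
    have h2 : p * (Real.log p - Real.log q) ≥ p * (p / q - q / p) / 2 := by
      nlinarith [hl]
    have h3 : p * (p / q - q / p) / 2 + q - p = (q - p) ^ 2 / (2 * q) := by
      field_simp
      ring
    have h4 : (q - p) ^ 2 / 2 ≤ (q - p) ^ 2 / (2 * q) := by
      apply div_le_div_of_nonneg_left (by positivity) (by positivity)
      linarith
    linarith

/-- symmetric KL pointwise bound : `2(p-q)² ≤ (p-q)(log p - log q)(p+q)`. -/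
lemma symm_term {p q : ℝ} (hp : 0 < p) (hq : 0 < q) :
    2 * (p - q) ^ 2 ≤ (p - q) * (Real.log p - Real.log q) * (p + q) := by
  rcases le_total q p with h | h
  · have := logmean hq h
    nlinarith [this, sq_nonneg (p - q)]
  · have := logmean hp h
    nlinarith [this, sq_nonneg (q - p)]

/-- Pinsker-type: `(∑|p-q|)² ≤ ⟨p-q, log p - log q⟩` on the interior simplex. -/
lemma l1_sq_le_inner_log {m : Type*} [Fintype m] (p q : m → ℝ)
    (hp : ∀ i, 0 < p i) (hq : ∀ i, 0 < q i)
    (hp1 : ∑ i, p i = 1) (hq1 : ∑ i, q i = 1) :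
    (∑ i, |p i - q i|) ^ 2 ≤ ∑ i, (p i - q i) * (Real.log (p i) - Real.log (q i)) := by
  classical
  set f : m → ℝ := fun i => |p i - q i| / Real.sqrt ((p i + q i) / 2) with hf
  set g : m → ℝ := fun i => Real.sqrt ((p i + q i) / 2) with hg
  have hpos : ∀ i, (0:ℝ) < (p i + q i) / 2 := fun i => by have := hp i; have := hq i; linarith
  have hfg : ∀ i, f i * g i = |p i - q i| := by
    intro i
    rw [hf, hg]
    have hs : Real.sqrt ((p i + q i) / 2) ≠ 0 :=
      (Real.sqrt_pos.2 (by have := hp i; have := hq i; linarith)).ne'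
    exact div_mul_cancel₀ _ hs
  have hcs := Finset.sum_mul_sq_le_sq_mul_sq Finset.univ f g
  have h1 : ∑ i, f i * g i = ∑ i, |p i - q i| := by
    exact Finset.sum_congr rfl (fun i _ => hfg i)
  have h2 : ∑ i, g i ^ 2 = 1 := by
    have : ∀ i, g i ^ 2 = (p i + q i) / 2 := fun i => Real.sq_sqrt (hpos i).le
    rw [Finset.sum_congr rfl (fun i _ => this i)]
    rw [← Finset.sum_div, Finset.sum_add_distrib, hp1, hq1]
    norm_num
  have h3 : ∀ i, f i ^ 2 ≤ (p i - q i) * (Real.log (p i) - Real.log (q i)) := by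
    intro i
    have : f i ^ 2 = (p i - q i) ^ 2 / ((p i + q i) / 2) := by
      rw [hf]
      rw [div_pow, sq_abs, Real.sq_sqrt (hpos i).le]
    rw [this, div_le_iff₀ (hpos i)]
    have := symm_term (hp i) (hq i)
    nlinarith [this]
  calc (∑ i, |p i - q i|) ^ 2 = (∑ i, f i * g i) ^ 2 := by rw [h1]
    _ ≤ (∑ i, f i ^ 2) * ∑ i, g i ^ 2 := hcs
    _ = ∑ i, f i ^ 2 := by rw [h2, mul_one]
    _ ≤ _ := Finset.sum_le_sum (fun i _ => h3 i)

/-- KL is nonnegative. -/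
lemma kl_nonneg {m : Type*} [Fintype m] (p q : m → ℝ)
    (hp : ∀ i, 0 ≤ p i) (hq : ∀ i, 0 < q i)
    (hp1 : ∑ i, p i = 1) (hq1 : ∑ i, q i = 1) :
    0 ≤ ∑ i, p i * (Real.log (p i) - Real.log (q i)) := by
  have h : ∀ i, p i - q i ≤ p i * (Real.log (p i) - Real.log (q i)) := by
    intro i
    rcases eq_or_lt_of_le (hp i) with h0 | h0
    · rw [← h0]
      simp only [zero_mul]
      linarith [(hq i).le]
    · have := Real.log_le_sub_one_of_pos (div_pos (hq i) h0)
      rw [Real.log_div (hq i).ne' h0.ne'] at this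
      have h2 := mul_le_mul_of_nonneg_left this h0.le
      have h3 : p i * (q i / p i - 1) = q i - p i := by field_simp
      nlinarith
  calc (0:ℝ) = ∑ i, (p i - q i) := by rw [Finset.sum_sub_distrib, hp1, hq1]; ring
    _ ≤ _ := Finset.sum_le_sum (fun i _ => h i)

/-- Reverse Pinsker: KL is at most `(∑|p-q|)²/mlow` if `q ≥ mlow`. -/
lemma kl_le_sq_div {m : Type*} [Fintype m] (p q : m → ℝ) (mlow : ℝ) (hm : 0 < mlow)
    (hp : ∀ i, 0 ≤ p i) (hq : ∀ i, mlow ≤ q i)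
    (hp1 : ∑ i, p i = 1) (hq1 : ∑ i, q i = 1) :
    ∑ i, p i * (Real.log (p i) - Real.log (q i)) ≤ (∑ i, |p i - q i|) ^ 2 / mlow := by
  have hq0 : ∀ i, 0 < q i := fun i => lt_of_lt_of_le hm (hq i)
  set a := ∑ i, |p i - q i| with ha
  have h : ∀ i, p i * (Real.log (p i) - Real.log (q i)) ≤ (p i - q i) ^ 2 / q i + (p i - q i) := by
    intro i
    rcases eq_or_lt_of_le (hp i) with h0 | h0
    · rw [← h0]
      have hz : ((0:ℝ) - q i) ^ 2 / q i + ((0:ℝ) - q i) = 0 := by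
        rw [zero_sub, neg_sq, sq, mul_div_assoc, div_self (hq0 i).ne', mul_one]
        ring
      simp only [zero_mul]
      linarith [hz.ge]
    · have := Real.log_le_sub_one_of_pos (div_pos h0 (hq0 i))
      rw [Real.log_div h0.ne' (hq0 i).ne'] at this
      have h2 : p i * (Real.log (p i) - Real.log (q i)) ≤ p i * (p i / q i - 1) :=
        mul_le_mul_of_nonneg_left this h0.le
      have hqne := (hq0 i).ne'
      have h3 : p i * (p i / q i - 1) = (p i - q i) ^ 2 / q i + (p i - q i) := by
        field_simp
        ring
      linarith
  have habs : ∀ i, |p i - q i| ≤ a := by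
    intro i
    rw [ha]
    exact Finset.single_le_sum (f := fun j => |p j - q j|) (fun j _ => abs_nonneg _)
      (Finset.mem_univ i)
  have h2 : ∀ i, (p i - q i) ^ 2 / q i ≤ |p i - q i| * a / mlow := by
    intro i
    apply div_le_div₀ (by positivity) _ hm (hq i)
    rw [← sq_abs]
    nlinarith [habs i, abs_nonneg (p i - q i)]
  calc ∑ i, p i * (Real.log (p i) - Real.log (q i))
      ≤ ∑ i, ((p i - q i) ^ 2 / q i + (p i - q i)) := Finset.sum_le_sum (fun i _ => h i)
    _ = ∑ i, (p i - q i) ^ 2 / q i := by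
        rw [Finset.sum_add_distrib, Finset.sum_sub_distrib, hp1, hq1]; ring
    _ ≤ ∑ i, |p i - q i| * a / mlow := Finset.sum_le_sum (fun i _ => h2 i)
    _ = a ^ 2 / mlow := by rw [← Finset.sum_div, ← Finset.sum_mul]; ring
  
/-- single-coordinate deviation controlled by KL on interior simplex. -/
lemma sq_le_two_kl {m : Type*} [Fintype m] (p q : m → ℝ)
    (hp : ∀ i, 0 < p i) (hq : ∀ i, 0 < q i)
    (hp1 : ∑ i, p i = 1) (hq1 : ∑ i, q i = 1) (i0 : m) :
    (q i0 - p i0) ^ 2 / 2 ≤ ∑ i, p i * (Real.log (p i) - Real.log (q i)) := by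
  have hsum : ∑ i, (p i * (Real.log (p i) - Real.log (q i)) + (q i - p i))
      = ∑ i, p i * (Real.log (p i) - Real.log (q i)) := by
    rw [Finset.sum_add_distrib, Finset.sum_sub_distrib, hp1, hq1]
    ring
  have hterm : ∀ i, (q i - p i) ^ 2 / 2
      ≤ p i * (Real.log (p i) - Real.log (q i)) + (q i - p i) := by
    intro i
    have := bregman (hp i) (coord_le_one p (fun j => (hp j).le) hp1 i) (hq i)
      (coord_le_one q (fun j => (hq j).le) hq1 i)
    linarith
  have hnn : ∀ i ∈ Finset.univ, (0:ℝ) ≤ p i * (Real.log (p i) - Real.log (q i)) + (q i - p i) :=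
    fun i _ => le_trans (by positivity) (hterm i)
  have hsingle := Finset.single_le_sum hnn (Finset.mem_univ i0)
  rw [hsum] at hsingle
  linarith [hterm i0]
lemma sum_prod_pi {ι : Type*} [Fintype ι] [DecidableEq ι] {κ : ι → Type*} [∀ l, Fintype (κ l)]
    (f : ∀ l, κ l → ℝ) :
    ∑ s : (∀ l, κ l), ∏ l, f l (s l) = ∏ l, ∑ j, f l j := by
  rw [Finset.prod_univ_sum, Fintype.piFinset_univ]

lemma single_step {ι : Type*} [Fintype ι] [DecidableEq ι] {κ : ι → Type*}
    [∀ l, Fintype (κ l)] [∀ l, DecidableEq (κ l)] [∀ l, Nonempty (κ l)]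
    (c : (∀ l, κ l) → ℝ) (δ : ℝ) (l₀ : ι)
    (hc : ∀ (s : ∀ l, κ l) (j : κ l₀), |c s - c (Function.update s l₀ j)| ≤ δ)
    (z : ∀ l, κ l → ℝ) (hz0 : ∀ l i, 0 ≤ z l i) (hz1 : ∀ l, ∑ i, z l i = 1)
    (v : κ l₀ → ℝ) (hv : ∑ j, v j = 1) :
    |(∑ s : ∀ l, κ l, (∏ l, z l (s l)) * c s)
      - ∑ s : ∀ l, κ l, (∏ l, Function.update z l₀ v l (s l)) * c s|
      ≤ δ / 2 * ∑ j, |z l₀ j - v j| := by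
  classical
  set W : (∀ l, κ l) → ℝ := fun s => ∏ l ∈ Finset.univ.erase l₀, z l (s l) with hW
  have hWnn : ∀ s, 0 ≤ W s := fun s => Finset.prod_nonneg (fun l _ => hz0 l (s l))
  have hprod1 : ∀ s : (∀ l, κ l), (∏ l, z l (s l)) = z l₀ (s l₀) * W s := by
    intro s
    exact (Finset.mul_prod_erase Finset.univ (fun l => z l (s l)) (Finset.mem_univ l₀)).symm
  have hprod2 : ∀ s : (∀ l, κ l), (∏ l, Function.update z l₀ v l (s l)) = v (s l₀) * W s := by
    intro s
    rw [hW, ← Finset.mul_prod_erase Finset.univ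
      (fun l => Function.update z l₀ v l (s l)) (Finset.mem_univ l₀)]
    rw [Function.update_self]
    congr 1
    apply Finset.prod_congr rfl
    intro l hl
    rw [Function.update_of_ne (Finset.ne_of_mem_erase hl)]
  have hdiff : (∑ s : ∀ l, κ l, (∏ l, z l (s l)) * c s)
      - (∑ s : ∀ l, κ l, (∏ l, Function.update z l₀ v l (s l)) * c s)
      = ∑ s : ∀ l, κ l, (z l₀ (s l₀) - v (s l₀)) * (W s * c s) := by
    rw [← Finset.sum_sub_distrib]
    apply Finset.sum_congr rfl
    intro s _
    rw [hprod1 s, hprod2 s]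
    ring
  set G : κ l₀ → ℝ := fun j => ∑ s ∈ Finset.univ.filter (fun s : (∀ l, κ l) => s l₀ = j),
    W s * c s with hG
  have hfiber : ∑ s : ∀ l, κ l, (z l₀ (s l₀) - v (s l₀)) * (W s * c s)
      = ∑ j, (z l₀ j - v j) * G j := by
    rw [← Finset.sum_fiberwise Finset.univ (fun s : (∀ l, κ l) => s l₀)
      (fun s => (z l₀ (s l₀) - v (s l₀)) * (W s * c s))]
    apply Finset.sum_congr rfl
    intro j _
    rw [hG, Finset.mul_sum]
    apply Finset.sum_congr rfl
    intro s hs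
    rw [Finset.mem_filter] at hs
    rw [hs.2]
  -- each fiber of W sums to 1
  have hWsum : ∀ j : κ l₀, ∑ s ∈ Finset.univ.filter (fun s : (∀ l, κ l) => s l₀ = j), W s = 1 := by
    intro j
    have key : ∑ s : ∀ l, κ l, (∏ l, Function.update z l₀ (fun i => if i = j then (1:ℝ) else 0) l (s l))
        = 1 := by
      rw [sum_prod_pi]
      apply Finset.prod_eq_one
      intro l _
      rcases eq_or_ne l l₀ with rfl | hl
      · rw [Function.update_self]
        simp
      · rw [Function.update_of_ne hl]
        exact hz1 l
    have expand : ∀ s : (∀ l, κ l),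
        (∏ l, Function.update z l₀ (fun i => if i = j then (1:ℝ) else 0) l (s l))
        = (if s l₀ = j then (1:ℝ) else 0) * W s := by
      intro s
      rw [hW, ← Finset.mul_prod_erase Finset.univ _ (Finset.mem_univ l₀), Function.update_self]
      congr 1
      apply Finset.prod_congr rfl
      intro l hl
      rw [Function.update_of_ne (Finset.ne_of_mem_erase hl)]
    rw [Finset.sum_filter, ← key]
    apply Finset.sum_congr rfl
    intro s _
    rw [expand s]
    split_ifs <;> simp
  have hGosc : ∀ j j' : κ l₀, |G j - G j'| ≤ δ := by
    intro j j'
    have hbij : G j' = ∑ s ∈ Finset.univ.filter (fun s : (∀ l, κ l) => s l₀ = j),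
        W s * c (Function.update s l₀ j') := by
      rw [hG]
      apply Finset.sum_nbij' (i := fun s => Function.update s l₀ j)
        (j := fun s => Function.update s l₀ j')
      · intro s hs
        simp only [Finset.mem_filter, Finset.mem_univ, true_and] at hs ⊢
        rw [Function.update_self]
      · intro s hs
        simp only [Finset.mem_filter, Finset.mem_univ, true_and] at hs ⊢
        rw [Function.update_self]
      · intro s hs
        simp only [Finset.mem_filter, Finset.mem_univ, true_and] at hs
        funext m
        rcases eq_or_ne m l₀ with rfl | hm
        · rw [Function.update_self, hs]
        · rw [Function.update_of_ne hm, Function.update_of_ne hm]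
      · intro s hs
        simp only [Finset.mem_filter, Finset.mem_univ, true_and] at hs
        funext m
        rcases eq_or_ne m l₀ with rfl | hm
        · rw [Function.update_self, hs]
        · rw [Function.update_of_ne hm, Function.update_of_ne hm]
      · intro s hs
        simp only [Finset.mem_filter, Finset.mem_univ, true_and] at hs
        have hWeq : W (Function.update s l₀ j) = W s := by
          rw [hW]
          apply Finset.prod_congr rfl
          intro l hl
          rw [Function.update_of_ne (Finset.ne_of_mem_erase hl)]
        have hceq : Function.update (Function.update s l₀ j) l₀ j' = Function.update s l₀ j' := by
          funext m
          rcases eq_or_ne m l₀ with rfl | hm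
          · rw [Function.update_self, Function.update_self]
          · rw [Function.update_of_ne hm, Function.update_of_ne hm, Function.update_of_ne hm]
        have hself : Function.update s l₀ j' = s := by
          rw [← hs, Function.update_eq_self]
        rw [hWeq, hceq, hself]
    rw [hbij, hG]
    rw [← Finset.sum_sub_distrib]
    calc |∑ s ∈ Finset.univ.filter (fun s : (∀ l, κ l) => s l₀ = j),
          (W s * c s - W s * c (Function.update s l₀ j'))|
        ≤ ∑ s ∈ Finset.univ.filter (fun s : (∀ l, κ l) => s l₀ = j),
          |W s * c s - W s * c (Function.update s l₀ j')| := Finset.abs_sum_le_sum_abs _ _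
      _ ≤ ∑ s ∈ Finset.univ.filter (fun s : (∀ l, κ l) => s l₀ = j), W s * δ := by
          apply Finset.sum_le_sum
          intro s _
          rw [← mul_sub, abs_mul, abs_of_nonneg (hWnn s)]
          exact mul_le_mul_of_nonneg_left (hc s j') (hWnn s)
      _ = δ := by rw [← Finset.sum_mul, hWsum j, one_mul]
  have hvsum : ∑ j, (z l₀ j - v j) = 0 := by
    rw [Finset.sum_sub_distrib, hz1 l₀, hv]
    ring
  rw [hdiff, hfiber]
  exact abs_sum_mul_le_half_osc (fun j => z l₀ j - v j) G hvsum δ hGosc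

lemma multi_step {ι : Type*} [Fintype ι] [DecidableEq ι] {κ : ι → Type*}
    [∀ l, Fintype (κ l)] [∀ l, DecidableEq (κ l)] [∀ l, Nonempty (κ l)]
    (c : (∀ l, κ l) → ℝ) (δ : ℝ)
    (hc : ∀ (l₀ : ι) (s : ∀ l, κ l) (j : κ l₀), |c s - c (Function.update s l₀ j)| ≤ δ)
    (A : Finset ι) :
    ∀ z w : ∀ l, κ l → ℝ, (∀ l i, 0 ≤ z l i) → (∀ l, ∑ i, z l i = 1) →
      (∀ l i, 0 ≤ w l i) → (∀ l, ∑ i, w l i = 1) → (∀ l, l ∉ A → z l = w l) →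
      |(∑ s : ∀ l, κ l, (∏ l, z l (s l)) * c s) - ∑ s : ∀ l, κ l, (∏ l, w l (s l)) * c s|
        ≤ δ / 2 * ∑ l ∈ A, ∑ j, |z l j - w l j| := by
  classical
  induction A using Finset.induction_on with
  | empty =>
      intro z w _ _ _ _ hzw
      have : z = w := funext (fun l => hzw l (by simp))
      simp [this]
  | @insert a A ha IH =>
      intro z w hz0 hz1 hw0 hw1 hzw
      set z' : ∀ l, κ l → ℝ := Function.update z a (w a) with hz'
      have hz'0 : ∀ l i, 0 ≤ z' l i := by
        intro l i
        rcases eq_or_ne l a with rfl | hl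
        · rw [hz', Function.update_self]; exact hw0 l i
        · rw [hz', Function.update_of_ne hl]; exact hz0 l i
      have hz'1 : ∀ l, ∑ i, z' l i = 1 := by
        intro l
        rcases eq_or_ne l a with rfl | hl
        · rw [hz', Function.update_self]; exact hw1 l
        · rw [hz', Function.update_of_ne hl]; exact hz1 l
      have step1 : |(∑ s : ∀ l, κ l, (∏ l, z l (s l)) * c s)
          - ∑ s : ∀ l, κ l, (∏ l, z' l (s l)) * c s| ≤ δ / 2 * ∑ j, |z a j - w a j| := by
        rw [hz']
        exact single_step c δ a (fun s j => hc a s j) z hz0 hz1 (w a) (hw1 a)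
      have step2 : |(∑ s : ∀ l, κ l, (∏ l, z' l (s l)) * c s)
          - ∑ s : ∀ l, κ l, (∏ l, w l (s l)) * c s| ≤ δ / 2 * ∑ l ∈ A, ∑ j, |z' l j - w l j| := by
        apply IH z' w hz'0 hz'1 hw0 hw1
        intro l hl
        rcases eq_or_ne l a with rfl | hne
        · rw [hz', Function.update_self]
        · rw [hz', Function.update_of_ne hne]
          exact hzw l (by simp [hl, hne])
      have hsame : ∑ l ∈ A, ∑ j, |z' l j - w l j| = ∑ l ∈ A, ∑ j, |z l j - w l j| := by
        apply Finset.sum_congr rfl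
        intro l hl
        have : l ≠ a := fun h => ha (h ▸ hl)
        rw [hz', Function.update_of_ne this]
      rw [Finset.sum_insert ha, mul_add]
      calc |(∑ s : ∀ l, κ l, (∏ l, z l (s l)) * c s) - ∑ s : ∀ l, κ l, (∏ l, w l (s l)) * c s|
          ≤ |(∑ s : ∀ l, κ l, (∏ l, z l (s l)) * c s) - ∑ s : ∀ l, κ l, (∏ l, z' l (s l)) * c s|
            + |(∑ s : ∀ l, κ l, (∏ l, z' l (s l)) * c s)
              - ∑ s : ∀ l, κ l, (∏ l, w l (s l)) * c s| := by
            exact abs_sub_le _ _ _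
        _ ≤ δ / 2 * ∑ j, |z a j - w a j| + δ / 2 * ∑ l ∈ A, ∑ j, |z' l j - w l j| :=
            add_le_add step1 step2
        _ = δ / 2 * ∑ j, |z a j - w a j| + δ / 2 * ∑ l ∈ A, ∑ j, |z l j - w l j| := by
            rw [hsame]

lemma mixedReward_lipschitz {N : ℕ} {n : Fin N → ℕ} (hn : ∀ k, 0 < n k)
    (rPure : ∀ k : Fin N, Fin (n k) → (∀ l : {l : Fin N // l ≠ k}, Fin (n l.1)) → ℝ)
    (δ : ℝ)
    (hδ : ∀ (k : Fin N) (i : Fin (n k)) (s s' : ∀ l : {l : Fin N // l ≠ k}, Fin (n l.1)),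
      (∃ l, ∀ m, m ≠ l → s m = s' m) → |rPure k i s - rPure k i s'| ≤ δ)
    (x y : Strat n) (hx0 : ∀ k i, 0 ≤ x k i) (hx1 : ∀ k, ∑ i, x k i = 1)
    (hy0 : ∀ k i, 0 ≤ y k i) (hy1 : ∀ k, ∑ i, y k i = 1)
    (k : Fin N) (i : Fin (n k)) :
    |mixedReward rPure x k i - mixedReward rPure y k i|
      ≤ δ / 2 * ∑ l : {l : Fin N // l ≠ k}, ∑ j, |x l.1 j - y l.1 j| := by
  classical
  letI : ∀ l : {l : Fin N // l ≠ k}, Nonempty (Fin (n l.1)) :=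
    fun l => ⟨⟨0, hn l.1⟩⟩
  have := multi_step (ι := {l : Fin N // l ≠ k}) (κ := fun l => Fin (n l.1))
    (rPure k i) δ
    (fun l₀ s j => hδ k i s (Function.update s l₀ j)
      ⟨l₀, fun m hm => (Function.update_of_ne hm _ _).symm⟩)
    Finset.univ (fun l => x l.1) (fun l => y l.1)
    (fun l j => hx0 l.1 j) (fun l => hx1 l.1) (fun l j => hy0 l.1 j) (fun l => hy1 l.1)
    (fun l hl => absurd (Finset.mem_univ l) hl)
  exact this

lemma exp_le_one_add_two_mul {ε : ℝ} (h0 : 0 ≤ ε) (h1 : ε ≤ 1) :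
    Real.exp ε ≤ 1 + 2 * ε := by
  have hcvx := convexOn_exp.2 (Set.mem_univ (0:ℝ)) (Set.mem_univ (1:ℝ))
    (by linarith : (0:ℝ) ≤ 1 - ε) h0 (by ring)
  simp only [smul_eq_mul, mul_zero, mul_one, zero_add, Real.exp_zero] at hcvx
  have he : Real.exp 1 ≤ 3 := by
    have := Real.exp_one_lt_d9
    linarith
  nlinarith [hcvx]

set_option maxHeartbeats 1000000 in
/-- softmax is 2-Lipschitz from ℓ∞ to ℓ1. -/
lemma softmax_l1_lipschitz {m : Type*} [Fintype m] [Nonempty m] [DecidableEq m]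
    (a b : m → ℝ) (ε : ℝ) (hε : ∀ i, |a i - b i| ≤ ε) :
    ∑ i, |Real.exp (a i) / (∑ j, Real.exp (a j)) - Real.exp (b i) / (∑ j, Real.exp (b j))|
      ≤ 2 * ε := by
  classical
  have hε0 : 0 ≤ ε := le_trans (abs_nonneg _) (hε (Classical.arbitrary m))
  set A : ℝ := ∑ j, Real.exp (a j) with hA
  set B : ℝ := ∑ j, Real.exp (b j) with hB
  have hApos : 0 < A := Finset.sum_pos (fun j _ => Real.exp_pos _) Finset.univ_nonempty
  have hBpos : 0 < B := Finset.sum_pos (fun j _ => Real.exp_pos _) Finset.univ_nonempty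
  set p : m → ℝ := fun i => Real.exp (a i) / A with hp
  set q : m → ℝ := fun i => Real.exp (b i) / B with hq
  have hp0 : ∀ i, 0 ≤ p i := fun i => by positivity
  have hq0 : ∀ i, 0 ≤ q i := fun i => by positivity
  have hp1 : ∑ i, p i = 1 := by rw [hp, ← Finset.sum_div, ← hA, div_self hApos.ne']
  have hq1 : ∑ i, q i = 1 := by rw [hq, ← Finset.sum_div, ← hB, div_self hBpos.ne']
  set S : Finset m := Finset.univ.filter (fun i => q i ≤ p i) with hS
  set Sc : Finset m := Finset.univ.filter (fun i => ¬ q i ≤ p i) with hSc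
  have hsplit0 : ∑ i ∈ S, (p i - q i) + ∑ i ∈ Sc, (p i - q i) = 0 := by
    rw [hS, hSc, Finset.sum_filter_add_sum_filter_not]
    rw [Finset.sum_sub_distrib, hp1, hq1]
    ring
  have habs : ∑ i, |p i - q i| = 2 * ∑ i ∈ S, (p i - q i) := by
    rw [← Finset.sum_filter_add_sum_filter_not Finset.univ (fun i => q i ≤ p i)
      (fun i => |p i - q i|), ← hS, ← hSc]
    have e1 : ∑ i ∈ S, |p i - q i| = ∑ i ∈ S, (p i - q i) := by
      apply Finset.sum_congr rfl
      intro i hi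
      rw [hS, Finset.mem_filter] at hi
      exact abs_of_nonneg (by linarith [hi.2])
    have e2 : ∑ i ∈ Sc, |p i - q i| = - ∑ i ∈ Sc, (p i - q i) := by
      rw [← Finset.sum_neg_distrib]
      apply Finset.sum_congr rfl
      intro i hi
      rw [hSc, Finset.mem_filter] at hi
      push_neg at hi
      rw [abs_of_neg (by linarith [hi.2])]
    rw [e1, e2]
    linarith [hsplit0]
  rw [habs]
  -- suffices to bound the one-sided sum by ε
  suffices h : ∑ i ∈ S, (p i - q i) ≤ ε by linarith
  rcases le_total 1 ε with hε1 | hε1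
  · -- trivial case ε ≥ 1
    calc ∑ i ∈ S, (p i - q i) ≤ ∑ i ∈ S, p i :=
          Finset.sum_le_sum (fun i _ => by linarith [hq0 i])
      _ ≤ ∑ i, p i := Finset.sum_le_sum_of_subset_of_nonneg (Finset.filter_subset _ _)
          (fun i _ _ => hp0 i)
      _ = 1 := hp1
      _ ≤ ε := hε1
  · -- main case ε ≤ 1
    rcases Finset.eq_empty_or_nonempty Sc with hScE | hScNE
    · -- S = univ : the sum is 0
      have : ∑ i ∈ Sc, (p i - q i) = 0 := by rw [hScE]; simp
      linarith [hsplit0]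
    · set As : ℝ := ∑ i ∈ S, Real.exp (a i) with hAs
      set Ac : ℝ := ∑ i ∈ Sc, Real.exp (a i) with hAc
      set Bs : ℝ := ∑ i ∈ S, Real.exp (b i) with hBs
      set Bc : ℝ := ∑ i ∈ Sc, Real.exp (b i) with hBc
      have hAsum : As + Ac = A := by
        rw [hAs, hAc, hA, hS, hSc, Finset.sum_filter_add_sum_filter_not]
      have hBsum : Bs + Bc = B := by
        rw [hBs, hBc, hB, hS, hSc, Finset.sum_filter_add_sum_filter_not]
      have hAs0 : 0 ≤ As := Finset.sum_nonneg (fun i _ => (Real.exp_pos _).le)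
      have hBs0 : 0 ≤ Bs := Finset.sum_nonneg (fun i _ => (Real.exp_pos _).le)
      have hAcpos : 0 < Ac := Finset.sum_pos (fun i _ => Real.exp_pos _) hScNE
      have hBcpos : 0 < Bc := Finset.sum_pos (fun i _ => Real.exp_pos _) hScNE
      set E : ℝ := Real.exp ε with hE
      set u : ℝ := Real.exp (-ε) with hu
      have hEpos : 0 < E := Real.exp_pos _
      have hupos : 0 < u := Real.exp_pos _
      have hEu : E * u = 1 := by rw [hE, hu, ← Real.exp_add]; simp
      have hE1 : 1 ≤ E := Real.one_le_exp hε0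
      have hE2 : E ≤ 1 + 2 * ε := exp_le_one_add_two_mul hε0 hε1
      have hu1 : 1 - ε ≤ u := by
        have := Real.add_one_le_exp (-ε)
        rw [← hu] at this
        linarith
      have hAsBs : As ≤ E * Bs := by
        rw [hAs, hBs, Finset.mul_sum]
        apply Finset.sum_le_sum
        intro i _
        rw [hE, ← Real.exp_add]
        apply Real.exp_le_exp.2
        have := abs_le.1 (hε i)
        linarith [this.2]
      have hAcBc : u * Bc ≤ Ac := by
        rw [hAc, hBc, Finset.mul_sum]
        apply Finset.sum_le_sum
        intro i _
        rw [hu, ← Real.exp_add]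
        apply Real.exp_le_exp.2
        have := abs_le.1 (hε i)
        linarith [this.1]
      -- the one-sided sum equals As/A - Bs/B
      have hsum1 : ∑ i ∈ S, (p i - q i) = As / A - Bs / B := by
        rw [Finset.sum_sub_distrib, hp, hq, ← Finset.sum_div, ← Finset.sum_div, ← hAs, ← hBs]
      rw [hsum1]
      have hD1pos : 0 < E * Bs + u * Bc := by positivity
      have hcross : As * (u * Bc) ≤ E * Bs * Ac :=
        mul_le_mul hAsBs hAcBc (by positivity) (by positivity)
      have step1 : As / A ≤ E * Bs / (E * Bs + u * Bc) := by
        rw [← hAsum, div_le_div_iff₀ (by linarith) hD1pos]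
        nlinarith [hcross]
      have step2 : E * Bs / (E * Bs + u * Bc) - Bs / B ≤ ε := by
        rw [← hBsum]
        rw [div_sub_div _ _ hD1pos.ne' (by linarith : Bs + Bc ≠ 0)]
        rw [div_le_iff₀ (by positivity)]
        have hnum : E * Bs * (Bs + Bc) - (E * Bs + u * Bc) * Bs = Bs * Bc * (E - u) := by ring
        rw [hnum]
        have e1 : u * (E * Bs - Bc) ^ 2 = E * Bs ^ 2 - 2 * (Bs * Bc) + u * Bc ^ 2 := by
          linear_combination (E * Bs ^ 2 - 2 * (Bs * Bc)) * hEu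
        have e2 : u * (E - 1) ^ 2 = E - 2 + u := by
          linear_combination (E - 2) * hEu
        have e3 : u * (E - 1) ^ 2 * (Bs * Bc) = (E - 2 + u) * (Bs * Bc) := by rw [e2]
        have e4 : (0:ℝ) ≤ u * (E * Bs - Bc) ^ 2 := by positivity
        have e5 : (0:ℝ) ≤ u * (E - 1) ^ 2 * (Bs * Bc) :=
          mul_nonneg (by positivity) (mul_nonneg hBs0 hBcpos.le)
        have hX : 0 ≤ E * Bs ^ 2 - 2 * (Bs * Bc) + u * Bc ^ 2 := e1 ▸ e4
        have hY : 0 ≤ (E - 2 + u) * (Bs * Bc) := e3 ▸ e5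
        have expand : (E * Bs + u * Bc) * (Bs + Bc)
            = (E * Bs ^ 2 - 2 * (Bs * Bc) + u * Bc ^ 2)
              + (E - 2 + u) * (Bs * Bc) + 4 * (Bs * Bc) := by ring
        have h4 : 4 * (Bs * Bc) ≤ (E * Bs + u * Bc) * (Bs + Bc) := by
          rw [expand]
          linarith [hX, hY]
        have c1 : Bs * Bc * (E - u) ≤ Bs * Bc * (3 * ε) :=
          mul_le_mul_of_nonneg_left (by linarith) (mul_nonneg hBs0 hBcpos.le)
        have c3 : ε * (4 * (Bs * Bc)) ≤ ε * ((E * Bs + u * Bc) * (Bs + Bc)) :=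
          mul_le_mul_of_nonneg_left h4 hε0
        have c4 : 0 ≤ ε * (Bs * Bc) := mul_nonneg hε0 (mul_nonneg hBs0 hBcpos.le)
        linarith [c1, c3, c4]
      linarith [step1, step2]

/-- The softmax best-response map whose fixed points are the QRE. -/
def Bmap {N : ℕ} {n : Fin N → ℕ}
    (rPure : ∀ k : Fin N, Fin (n k) → (∀ l : {l : Fin N // l ≠ k}, Fin (n l.1)) → ℝ)
    (T : Fin N → ℝ) (x : Strat n) : Strat n :=
  fun k i => Real.exp (mixedReward rPure x k i / T k)
    / ∑ j, Real.exp (mixedReward rPure x k j / T k)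

section Bmap

variable {N : ℕ} {n : Fin N → ℕ}
  (rPure : ∀ k : Fin N, Fin (n k) → (∀ l : {l : Fin N // l ≠ k}, Fin (n l.1)) → ℝ)
  (T : Fin N → ℝ)

lemma Bmap_pos (hn : ∀ k, 0 < n k) (x : Strat n) (k : Fin N) (i : Fin (n k)) :
    0 < Bmap rPure T x k i := by
  haveI : Nonempty (Fin (n k)) := ⟨⟨0, hn k⟩⟩
  exact div_pos (Real.exp_pos _)
    (Finset.sum_pos (fun j _ => Real.exp_pos _) Finset.univ_nonempty)

lemma Bmap_sum (hn : ∀ k, 0 < n k) (x : Strat n) (k : Fin N) :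
    ∑ i, Bmap rPure T x k i = 1 := by
  haveI : Nonempty (Fin (n k)) := ⟨⟨0, hn k⟩⟩
  simp only [Bmap]
  rw [← Finset.sum_div, div_self]
  exact (Finset.sum_pos (fun j _ => Real.exp_pos _) Finset.univ_nonempty).ne'

lemma mixedReward_continuous (k : Fin N) (i : Fin (n k)) :
    Continuous (fun x : Strat n => mixedReward rPure x k i) := by
  unfold mixedReward
  apply continuous_finset_sum
  intro s _
  apply Continuous.mul ?_ continuous_const
  apply continuous_finset_prod
  intro l _
  exact (continuous_apply (s l)).comp (continuous_apply l.1)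

lemma Bmap_continuous (k : Fin N) (i : Fin (n k)) :
    Continuous (fun x : Strat n => Bmap rPure T x k i) := by
  unfold Bmap
  apply Continuous.div
  · exact Real.continuous_exp.comp ((mixedReward_continuous rPure k i).div_const _)
  · apply continuous_finset_sum
    intro j _
    exact Real.continuous_exp.comp ((mixedReward_continuous rPure k j).div_const _)
  · intro x
    exact (Finset.sum_pos (fun j _ => Real.exp_pos _)
      ⟨i, Finset.mem_univ i⟩).ne'

/-- double sum over "other players" identity -/
lemma sum_subtype_ne {N' : ℕ} (f : Fin N' → ℝ) :
    ∑ k, ∑ l : {l : Fin N' // l ≠ k}, f l.1 = ((N':ℝ) - 1) * ∑ l, f l := by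
  classical
  have h1 : ∀ k : Fin N', ∑ l : {l : Fin N' // l ≠ k}, f l.1
      = ∑ l ∈ Finset.univ.erase k, f l := by
    intro k
    exact (Finset.sum_subtype (Finset.univ.erase k)
      (fun l => by simp [Finset.mem_erase]) f).symm
  have h2 : ∀ k : Fin N', ∑ l ∈ Finset.univ.erase k, f l = (∑ l, f l) - f k := by
    intro k
    rw [Finset.sum_erase_eq_sub (Finset.mem_univ k)]
  rw [Finset.sum_congr rfl (fun k _ => (h1 k).trans (h2 k))]
  rw [Finset.sum_sub_distrib, Finset.sum_const, Finset.card_univ, Fintype.card_fin,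
    nsmul_eq_mul]
  ring

lemma Bmap_contract (hn : ∀ k, 0 < n k)
    (δ : ℝ) (hδ0 : 0 ≤ δ)
    (hδ : ∀ (k : Fin N) (i : Fin (n k)) (s s' : ∀ l : {l : Fin N // l ≠ k}, Fin (n l.1)),
      (∃ l, ∀ m, m ≠ l → s m = s' m) → |rPure k i s - rPure k i s'| ≤ δ)
    (hT0 : ∀ k, 0 < T k) (Tm : ℝ) (hTm : 0 < Tm) (hTmle : ∀ k, Tm ≤ T k)
    (x y : Strat n) (hx0 : ∀ k i, 0 ≤ x k i) (hx1 : ∀ k, ∑ i, x k i = 1)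
    (hy0 : ∀ k i, 0 ≤ y k i) (hy1 : ∀ k, ∑ i, y k i = 1) :
    ∑ k, ∑ i, |Bmap rPure T x k i - Bmap rPure T y k i|
      ≤ (δ * ((N:ℝ) - 1) / Tm) * ∑ k, ∑ i, |x k i - y k i| := by
  classical
  set S : Fin N → ℝ := fun k => ∑ l : {l : Fin N // l ≠ k}, ∑ j, |x l.1 j - y l.1 j| with hS
  have hSnn : ∀ k, 0 ≤ S k := fun k => Finset.sum_nonneg (fun l _ =>
    Finset.sum_nonneg (fun j _ => abs_nonneg _))
  have hk : ∀ k, ∑ i, |Bmap rPure T x k i - Bmap rPure T y k i| ≤ δ * S k / T k := by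
    intro k
    haveI : Nonempty (Fin (n k)) := ⟨⟨0, hn k⟩⟩
    have happ := softmax_l1_lipschitz (fun i => mixedReward rPure x k i / T k)
      (fun i => mixedReward rPure y k i / T k) (δ / 2 * S k / T k) ?_
    · calc ∑ i, |Bmap rPure T x k i - Bmap rPure T y k i|
          ≤ 2 * (δ / 2 * S k / T k) := happ
        _ = δ * S k / T k := by ring
    · intro i
      rw [div_sub_div_same, abs_div, abs_of_pos (hT0 k)]
      have hTk := hT0 k
      gcongr
      exact mixedReward_lipschitz hn rPure δ hδ x y hx0 hx1 hy0 hy1 k i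
  calc ∑ k, ∑ i, |Bmap rPure T x k i - Bmap rPure T y k i|
      ≤ ∑ k, δ * S k / T k := Finset.sum_le_sum (fun k _ => hk k)
    _ ≤ ∑ k, δ * S k / Tm := by
        apply Finset.sum_le_sum
        intro k _
        have h1 := hTm
        have h2 := hTmle k
        have h3 : 0 ≤ δ * S k := mul_nonneg hδ0 (hSnn k)
        gcongr
    _ = (δ / Tm) * ∑ k, S k := by
        rw [Finset.mul_sum]
        apply Finset.sum_congr rfl
        intro k _
        ring
    _ = (δ * ((N:ℝ) - 1) / Tm) * ∑ k, ∑ i, |x k i - y k i| := by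
        rw [hS, sum_subtype_ne (fun l => ∑ j, |x l j - y l j|)]
        ring

end Bmap

section ODE

variable {N : ℕ} {n : Fin N → ℕ}

set_option maxHeartbeats 2000000 in
lemma converge (hN : 0 < N) (hn : ∀ k, 0 < n k)
    (rPure : ∀ k : Fin N, Fin (n k) → (∀ l : {l : Fin N // l ≠ k}, Fin (n l.1)) → ℝ)
    (δ : ℝ) (hδ0 : 0 ≤ δ)
    (hδ : ∀ (k : Fin N) (i : Fin (n k)) (s s' : ∀ l : {l : Fin N // l ≠ k}, Fin (n l.1)),
      (∃ l, ∀ m, m ≠ l → s m = s' m) → |rPure k i s - rPure k i s'| ≤ δ)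
    (T : Fin N → ℝ) (hT0 : ∀ k, 0 < T k) (hT : ∀ k, δ * ((N : ℝ) - 1) < T k)
    (p : Strat n) (hp0 : ∀ k i, 0 < p k i) (hp1 : ∀ k, ∑ i, p k i = 1)
    (hpQ : ∀ k i, p k i = Real.exp (mixedReward rPure p k i / T k)
      / ∑ j, Real.exp (mixedReward rPure p k j / T k))
    (x : ℝ → Strat n) (hxI : ∀ t, JointInterior (x t))
    (hxD : ∀ t k i, HasDerivAt (fun s => x s k i)
      (x t k i * (mixedReward rPure (x t) k i
        - (∑ j, x t k j * mixedReward rPure (x t) k j)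
        - T k * (Real.log (x t k i) - ∑ j, x t k j * Real.log (x t k j)))) t) :
    Tendsto x atTop (𝓝 p) := by
  classical
  have hx0 : ∀ t k i, 0 < x t k i := fun t k i => (hxI t k).1 i
  have hx1 : ∀ t k, ∑ i, x t k i = 1 := fun t k => (hxI t k).2
  set r : Strat n → Strat n := mixedReward rPure with hr
  set w : ℝ → ∀ k, Fin (n k) → ℝ := fun t k i =>
    r (x t) k i - (∑ j, x t k j * r (x t) k j)
      - T k * (Real.log (x t k i) - ∑ j, x t k j * Real.log (x t k j)) with hw
  set a : ℝ → Fin N → ℝ := fun t k => ∑ i, |p k i - x t k i| with ha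
  have hann : ∀ t k, 0 ≤ a t k := fun t k => Finset.sum_nonneg (fun i _ => abs_nonneg _)
  set V : ℝ → ℝ := fun t => ∑ k, ∑ i, p k i * (Real.log (p k i) - Real.log (x t k i)) with hV
  set Vd : ℝ → ℝ := fun t => ∑ k, ∑ i, p k i * -(w t k i) with hVdd
  have hVderiv : ∀ t, HasDerivAt V (Vd t) t := by
    intro t
    apply HasDerivAt.fun_sum
    intro k _
    apply HasDerivAt.fun_sum
    intro i _
    have hlog : HasDerivAt (fun s => Real.log (x s k i)) (w t k i) t := by
      have h1 := (hxD t k i).log (hx0 t k i).ne'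
      convert h1 using 1
      exact (mul_div_cancel_left₀ _ (hx0 t k i).ne').symm
    exact (hlog.const_sub (Real.log (p k i))).const_mul (p k i)
  -- key lower bound on ⟨p_k, w_k⟩
  have hkey : ∀ t k, T k * (a t k) ^ 2
      - δ / 2 * ((∑ l : {l : Fin N // l ≠ k}, a t l.1) * a t k)
      ≤ ∑ i, p k i * w t k i := by
    intro t k
    set Sl : ℝ := ∑ l : {l : Fin N // l ≠ k}, a t l.1 with hSl
    have hSnn : 0 ≤ Sl := Finset.sum_nonneg (fun l _ => hann t l.1)
    set G : ℝ := (∑ j, x t k j * r (x t) k j) - T k * ∑ j, x t k j * Real.log (x t k j) with hG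
    set g : Fin (n k) → ℝ := fun i => r (x t) k i - T k * Real.log (x t k i) with hg
    have hA : ∑ i, p k i * w t k i = ∑ i, (p k i - x t k i) * g i := by
      have e1 : ∀ i, p k i * w t k i = p k i * g i - p k i * G := by
        intro i
        simp only [hw, hg, hG]
        ring
      have e2 : ∀ i, x t k i * g i
          = x t k i * r (x t) k i - T k * (x t k i * Real.log (x t k i)) := by
        intro i
        simp only [hg]
        ring
      rw [Finset.sum_congr rfl (fun i _ => e1 i), Finset.sum_sub_distrib,
        ← Finset.sum_mul, hp1 k, one_mul]
      have e3 : ∑ i, x t k i * g i = G := by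
        rw [Finset.sum_congr rfl (fun i _ => e2 i), Finset.sum_sub_distrib,
          ← Finset.mul_sum, hG]
      have e4 : ∑ i, (p k i - x t k i) * g i
          = ∑ i, p k i * g i - ∑ i, x t k i * g i := by
        rw [← Finset.sum_sub_distrib]
        exact Finset.sum_congr rfl (fun i _ => by ring)
      rw [e4, e3]
    have hZpos : 0 < ∑ j, Real.exp (r p k j / T k) := by
      haveI : Nonempty (Fin (n k)) := ⟨⟨0, hn k⟩⟩
      exact Finset.sum_pos (fun j _ => Real.exp_pos _) Finset.univ_nonempty
    have hconst : ∀ i : Fin (n k), r p k i - T k * Real.log (p k i)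
        = T k * Real.log (∑ j, Real.exp (r p k j / T k)) := by
      intro i
      rw [hpQ k i, Real.log_div (Real.exp_ne_zero _) hZpos.ne', Real.log_exp]
      have := (hT0 k).ne'
      have h' : T k * (r p k i / T k) = r p k i := by field_simp
      linear_combination -h'
    have hB : ∑ i, (p k i - x t k i) * (r p k i - T k * Real.log (p k i)) = 0 := by
      rw [Finset.sum_congr rfl (fun i _ => by rw [hconst i])]
      rw [← Finset.sum_mul, Finset.sum_sub_distrib, hp1 k, hx1 t k]
      ring
    have hsplit : ∑ i, p k i * w t k i
        = (∑ i, (p k i - x t k i) * (r (x t) k i - r p k i))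
          + T k * ∑ i, (p k i - x t k i) * (Real.log (p k i) - Real.log (x t k i)) := by
      rw [hA]
      have e : ∀ i, (p k i - x t k i) * g i
          = ((p k i - x t k i) * (r (x t) k i - r p k i)
            + T k * ((p k i - x t k i) * (Real.log (p k i) - Real.log (x t k i))))
            + (p k i - x t k i) * (r p k i - T k * Real.log (p k i)) := by
        intro i
        simp only [hg]
        ring
      rw [Finset.sum_congr rfl (fun i _ => e i), Finset.sum_add_distrib,
        Finset.sum_add_distrib, hB, add_zero, ← Finset.mul_sum]
    have hrlip : ∀ i, |r (x t) k i - r p k i| ≤ δ / 2 * Sl := by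
      intro i
      have hl := mixedReward_lipschitz hn rPure δ hδ (x t) p
        (fun k' i' => (hx0 t k' i').le) (hx1 t) (fun k' i' => (hp0 k' i').le) hp1 k i
      have heq : ∀ l : {l : Fin N // l ≠ k}, (∑ j, |x t l.1 j - p l.1 j|) = a t l.1 := by
        intro l
        simp only [ha]
        exact Finset.sum_congr rfl (fun j _ => abs_sub_comm _ _)
      calc |r (x t) k i - r p k i|
          ≤ δ / 2 * ∑ l : {l : Fin N // l ≠ k}, ∑ j, |x t l.1 j - p l.1 j| := hl
        _ = δ / 2 * Sl := by
            rw [Finset.sum_congr rfl (fun l _ => heq l), hSl]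
    have hbound1 : -(δ / 2 * (Sl * a t k))
        ≤ ∑ i, (p k i - x t k i) * (r (x t) k i - r p k i) := by
      have hterm : ∀ i, -(δ / 2 * Sl) * |p k i - x t k i|
          ≤ (p k i - x t k i) * (r (x t) k i - r p k i) := by
        intro i
        have h1 : |(p k i - x t k i) * (r (x t) k i - r p k i)|
            ≤ |p k i - x t k i| * (δ / 2 * Sl) := by
          rw [abs_mul]
          exact mul_le_mul_of_nonneg_left (hrlip i) (abs_nonneg _)
        have h2 := neg_abs_le ((p k i - x t k i) * (r (x t) k i - r p k i))
        nlinarith [h1, h2]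
      calc -(δ / 2 * (Sl * a t k)) = ∑ i, -(δ / 2 * Sl) * |p k i - x t k i| := by
            rw [← Finset.mul_sum]
            simp only [ha]
            ring
        _ ≤ _ := Finset.sum_le_sum (fun i _ => hterm i)
    have hbound2 : (a t k) ^ 2
        ≤ ∑ i, (p k i - x t k i) * (Real.log (p k i) - Real.log (x t k i)) := by
      have hl2 := l1_sq_le_inner_log (p k) (x t k) (hp0 k) (hx0 t k) (hp1 k) (hx1 t k)
      simpa [ha] using hl2
    have hTk := hT0 k
    have h3 := mul_le_mul_of_nonneg_left hbound2 hTk.le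
    rw [hsplit]
    linarith [hbound1, h3]
  -- constants
  haveI : Nonempty (Fin N) := ⟨⟨0, hN⟩⟩
  set c0 : ℝ := Finset.univ.inf' Finset.univ_nonempty
    (fun k => T k - δ * ((N : ℝ) - 1)) with hc0
  have hc0pos : 0 < c0 := by
    obtain ⟨k0, -, hk0⟩ := Finset.exists_mem_eq_inf' (Finset.univ_nonempty (α := Fin N))
      (fun k => T k - δ * ((N : ℝ) - 1))
    rw [hc0, hk0]
    have := hT k0
    linarith
  have hc0le : ∀ k, c0 ≤ T k - δ * ((N : ℝ) - 1) :=
    fun k => Finset.inf'_le _ (Finset.mem_univ k)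
  have hNR : (0:ℝ) ≤ (N : ℝ) - 1 := by
    have h1 : (1:ℝ) ≤ (N:ℝ) := by exact_mod_cast hN
    linarith
  have hcard : ∀ k : Fin N, ((Fintype.card {l : Fin N // l ≠ k} : ℝ)) = (N : ℝ) - 1 := by
    intro k
    have h1 : Fintype.card {l : Fin N // l ≠ k} = N - 1 := by
      rw [Fintype.card_subtype_compl, Fintype.card_subtype_eq, Fintype.card_fin]
    rw [h1, Nat.cast_sub hN, Nat.cast_one]
  have hsumSq : ∀ t, ∑ k, (∑ l : {l : Fin N // l ≠ k}, a t l.1) * a t k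
      ≤ ((N : ℝ) - 1) * ∑ k, (a t k) ^ 2 := by
    intro t
    have h1 : ∀ k : Fin N, (∑ l : {l : Fin N // l ≠ k}, a t l.1) * a t k
        ≤ ∑ l : {l : Fin N // l ≠ k}, ((a t k) ^ 2 + (a t l.1) ^ 2) / 2 := by
      intro k
      rw [Finset.sum_mul]
      apply Finset.sum_le_sum
      intro l _
      nlinarith [sq_nonneg (a t k - a t l.1), hann t k, hann t l.1]
    have h2 : ∀ k : Fin N, ∑ l : {l : Fin N // l ≠ k}, ((a t k) ^ 2 + (a t l.1) ^ 2) / 2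
        = ((N : ℝ) - 1) * (a t k) ^ 2 / 2 + (∑ l : {l : Fin N // l ≠ k}, (a t l.1) ^ 2) / 2 := by
      intro k
      rw [← Finset.sum_div, Finset.sum_add_distrib, Finset.sum_const,
        Finset.card_univ, nsmul_eq_mul, hcard k]
      ring
    have h3 : ∑ k, ∑ l : {l : Fin N // l ≠ k}, (a t l.1) ^ 2
        = ((N : ℝ) - 1) * ∑ l, (a t l) ^ 2 :=
      sum_subtype_ne (fun l => (a t l) ^ 2)
    calc ∑ k, (∑ l : {l : Fin N // l ≠ k}, a t l.1) * a t k
        ≤ ∑ k, (((N : ℝ) - 1) * (a t k) ^ 2 / 2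
            + (∑ l : {l : Fin N // l ≠ k}, (a t l.1) ^ 2) / 2) := by
          apply Finset.sum_le_sum
          intro k _
          rw [← h2 k]
          exact h1 k
      _ = ((N : ℝ) - 1) * ∑ k, (a t k) ^ 2 := by
          rw [Finset.sum_add_distrib, ← Finset.sum_div, ← Finset.sum_div, h3,
            ← Finset.mul_sum]
          ring
  have hsqnn : ∀ t, 0 ≤ ∑ k, (a t k) ^ 2 :=
    fun t => Finset.sum_nonneg (fun k _ => sq_nonneg _)
  have hVdle : ∀ t, Vd t ≤ -(c0 * ∑ k, (a t k) ^ 2) := by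
    intro t
    have h1 : Vd t = -∑ k, ∑ i, p k i * w t k i := by
      simp only [hVdd, mul_neg]
      rw [← Finset.sum_neg_distrib]
      apply Finset.sum_congr rfl
      intro k _
      rw [← Finset.sum_neg_distrib]
    have h2 : ∑ k, (T k * (a t k) ^ 2
        - δ / 2 * ((∑ l : {l : Fin N // l ≠ k}, a t l.1) * a t k))
        ≤ ∑ k, ∑ i, p k i * w t k i := Finset.sum_le_sum (fun k _ => hkey t k)
    have h3 : ∑ k, (δ * ((N : ℝ) - 1) + c0) * (a t k) ^ 2 ≤ ∑ k, T k * (a t k) ^ 2 := by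
      apply Finset.sum_le_sum
      intro k _
      apply mul_le_mul_of_nonneg_right ?_ (sq_nonneg _)
      linarith [hc0le k]
    have h4 : δ / 2 * (∑ k, (∑ l : {l : Fin N // l ≠ k}, a t l.1) * a t k)
        ≤ δ / 2 * (((N : ℝ) - 1) * ∑ k, (a t k) ^ 2) :=
      mul_le_mul_of_nonneg_left (hsumSq t) (by linarith)
    have h5 : ∑ k, (T k * (a t k) ^ 2
        - δ / 2 * ((∑ l : {l : Fin N // l ≠ k}, a t l.1) * a t k))
        = ∑ k, T k * (a t k) ^ 2
          - δ / 2 * ∑ k, (∑ l : {l : Fin N // l ≠ k}, a t l.1) * a t k := by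
      rw [Finset.sum_sub_distrib, Finset.mul_sum]
    have h6 : ∑ k, (δ * ((N : ℝ) - 1) + c0) * (a t k) ^ 2
        = (δ * ((N : ℝ) - 1) + c0) * ∑ k, (a t k) ^ 2 := by
      rw [Finset.mul_sum]
    have h7 : 0 ≤ δ * ((N:ℝ) - 1) * (∑ k, (a t k) ^ 2) / 2 := by
      have := hsqnn t
      positivity
    rw [h1]
    have h8 : c0 * ∑ k, (a t k) ^ 2 ≤ ∑ k, ∑ i, p k i * w t k i := by
      nlinarith [h2, h3, h4, h5, h6, h7]
    linarith
  have hVnn : ∀ t, 0 ≤ V t :=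
    fun t => Finset.sum_nonneg (fun k _ => kl_nonneg (p k) (x t k)
      (fun i => (hp0 k i).le) (hx0 t k) (hp1 k) (hx1 t k))
  have hVd0 : ∀ t, Vd t ≤ 0 := by
    intro t
    have h1 := hVdle t
    nlinarith [hsqnn t, hc0pos]
  have hVdiff : Differentiable ℝ V := fun t => (hVderiv t).differentiableAt
  have hVanti : Antitone V := by
    apply antitone_of_deriv_nonpos hVdiff
    intro t
    rw [(hVderiv t).deriv]
    exact hVd0 t
  set C : ℝ := V 0 with hC
  have hVleC : ∀ t, 0 ≤ t → V t ≤ C := fun t ht => hVanti ht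
  have hKL : ∀ t k, ∑ i, p k i * (Real.log (p k i) - Real.log (x t k i)) ≤ V t := by
    intro t k
    apply Finset.single_le_sum
      (f := fun k => ∑ i, p k i * (Real.log (p k i) - Real.log (x t k i)))
      (fun l _ => kl_nonneg (p l) (x t l) (fun i => (hp0 l i).le) (hx0 t l)
        (hp1 l) (hx1 t l))
      (Finset.mem_univ k)
  set Q : Fin N → ℝ := fun k => ∑ j, |p k j * Real.log (p k j)| with hQ
  have hterm : ∀ t, 0 ≤ t → ∀ k i,
      p k i * (Real.log (p k i) - Real.log (x t k i)) ≤ C + Q k := by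
    intro t ht k i
    have h1 : ∑ j, p k j * (Real.log (p k j) - Real.log (x t k j))
        = p k i * (Real.log (p k i) - Real.log (x t k i))
          + ∑ j ∈ Finset.univ.erase i, p k j * (Real.log (p k j) - Real.log (x t k j)) :=
      (Finset.add_sum_erase _ _ (Finset.mem_univ i)).symm
    have h2 : ∀ j, -|p k j * Real.log (p k j)|
        ≤ p k j * (Real.log (p k j) - Real.log (x t k j)) := by
      intro j
      have hxle := coord_le_one (x t k) (fun i' => (hx0 t k i').le) (hx1 t k) j
      have hlx : Real.log (x t k j) ≤ 0 := Real.log_nonpos (hx0 t k j).le hxle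
      have h21 : p k j * Real.log (p k j)
          ≤ p k j * (Real.log (p k j) - Real.log (x t k j)) := by
        nlinarith [(hp0 k j).le]
      linarith [neg_abs_le (p k j * Real.log (p k j))]
    have h3 : -(Q k) ≤ ∑ j ∈ Finset.univ.erase i,
        p k j * (Real.log (p k j) - Real.log (x t k j)) := by
      calc -(Q k) ≤ -∑ j ∈ Finset.univ.erase i, |p k j * Real.log (p k j)| := by
            apply neg_le_neg
            simp only [hQ]
            exact Finset.sum_le_sum_of_subset_of_nonneg
              (Finset.erase_subset _ _) (fun j _ _ => abs_nonneg _)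
        _ = ∑ j ∈ Finset.univ.erase i, -|p k j * Real.log (p k j)| := by
            rw [Finset.sum_neg_distrib]
        _ ≤ _ := Finset.sum_le_sum (fun j _ => h2 j)
    have h4 := hKL t k
    have h5 := hVleC t ht
    linarith [h1, h3, h4, h5]
  set m0 : ∀ k : Fin N, Fin (n k) → ℝ :=
    fun k i => Real.exp (Real.log (p k i) - (C + Q k) / p k i) with hm0
  have hxm : ∀ t, 0 ≤ t → ∀ k i, m0 k i ≤ x t k i := by
    intro t ht k i
    have h1 := hterm t ht k i
    have h3 : Real.log (p k i) - Real.log (x t k i) ≤ (C + Q k) / p k i := by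
      rw [le_div_iff₀ (hp0 k i)]
      nlinarith [h1]
    calc m0 k i ≤ Real.exp (Real.log (x t k i)) := Real.exp_le_exp.2 (by linarith)
      _ = x t k i := Real.exp_log (hx0 t k i)
  haveI hsig : Nonempty ((k : Fin N) × Fin (n k)) := ⟨⟨⟨0, hN⟩, ⟨0, hn _⟩⟩⟩
  set mlow : ℝ := Finset.univ.inf' Finset.univ_nonempty
    (fun σ : (k : Fin N) × Fin (n k) => m0 σ.1 σ.2) with hmlow
  have hmlowpos : 0 < mlow := by
    obtain ⟨σ, -, hσ⟩ := Finset.exists_mem_eq_inf'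
      (Finset.univ_nonempty (α := (k : Fin N) × Fin (n k)))
      (fun σ : (k : Fin N) × Fin (n k) => m0 σ.1 σ.2)
    rw [hmlow, hσ, hm0]
    exact Real.exp_pos _
  have hmlowle : ∀ t, 0 ≤ t → ∀ k i, mlow ≤ x t k i := fun t ht k i =>
    le_trans (Finset.inf'_le _ (Finset.mem_univ (⟨k, i⟩ : (k : Fin N) × Fin (n k))))
      (hxm t ht k i)
  set lam : ℝ := c0 * mlow with hlam
  have hlampos : 0 < lam := mul_pos hc0pos hmlowpos
  have hgron : ∀ t, 0 ≤ t → Vd t ≤ -lam * V t := by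
    intro t ht
    have h1 : V t ≤ (∑ k, (a t k) ^ 2) / mlow := by
      have h11 : ∀ k : Fin N, ∑ i, p k i * (Real.log (p k i) - Real.log (x t k i))
          ≤ (a t k) ^ 2 / mlow := by
        intro k
        have := kl_le_sq_div (p k) (x t k) mlow hmlowpos (fun i => (hp0 k i).le)
          (fun i => hmlowle t ht k i) (hp1 k) (hx1 t k)
        simpa [ha] using this
      calc V t ≤ ∑ k, (a t k) ^ 2 / mlow := Finset.sum_le_sum (fun k _ => h11 k)
        _ = (∑ k, (a t k) ^ 2) / mlow := by rw [Finset.sum_div]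
    have h2 : mlow * V t ≤ ∑ k, (a t k) ^ 2 := by
      rw [mul_comm, ← le_div_iff₀ hmlowpos]
      exact h1
    have h3 : lam * V t ≤ c0 * ∑ k, (a t k) ^ 2 := by
      rw [hlam, mul_assoc]
      exact mul_le_mul_of_nonneg_left h2 hc0pos.le
    have h4 := hVdle t
    linarith
  set W : ℝ → ℝ := fun t => V t * Real.exp (lam * t) with hW
  have hWderiv : ∀ t, HasDerivAt W
      (Vd t * Real.exp (lam * t) + V t * (Real.exp (lam * t) * lam)) t := by
    intro t
    have h1 : HasDerivAt (fun s : ℝ => lam * s) lam t := by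
      simpa using (hasDerivAt_id t).const_mul lam
    exact (hVderiv t).mul h1.exp
  have hWanti : AntitoneOn W (Set.Ici 0) := by
    apply antitoneOn_of_deriv_nonpos (convex_Ici 0)
    · apply Continuous.continuousOn
      exact (hVdiff.continuous.mul (Real.continuous_exp.comp (continuous_const.mul continuous_id)))
    · intro t _
      exact (hWderiv t).differentiableAt.differentiableWithinAt
    · intro t ht
      rw [(hWderiv t).deriv]
      have ht' : 0 ≤ t := le_of_lt (by simpa [interior_Ici] using ht)
      have h1 := hgron t ht'
      have h2 : 0 < Real.exp (lam * t) := Real.exp_pos _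
      nlinarith [mul_le_mul_of_nonneg_right h1 h2.le]
  have hVdecay : ∀ t, 0 ≤ t → V t ≤ C * Real.exp (-(lam * t)) := by
    intro t ht
    have h1 : W t ≤ W 0 := hWanti Set.self_mem_Ici (Set.mem_Ici.2 ht) ht
    have h2 : W 0 = C := by simp [hW, hC]
    have h3 : V t = W t * Real.exp (-(lam * t)) := by
      simp only [hW]
      rw [mul_assoc, ← Real.exp_add]
      simp
    rw [h3]
    apply mul_le_mul_of_nonneg_right ?_ (Real.exp_pos _).le
    linarith [h1, h2.ge]
  have hCexp : Tendsto (fun t : ℝ => C * Real.exp (-(lam * t))) atTop (𝓝 0) := by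
    have h1 : Tendsto (fun t : ℝ => lam * t) atTop atTop :=
      Tendsto.const_mul_atTop hlampos tendsto_id
    have h2 := Real.tendsto_exp_neg_atTop_nhds_zero.comp h1
    have h3 := h2.const_mul C
    simpa [Function.comp] using h3
  have hV0 : Tendsto V atTop (𝓝 0) := by
    apply tendsto_of_tendsto_of_tendsto_of_le_of_le' tendsto_const_nhds hCexp
    · exact Filter.Eventually.of_forall hVnn
    · exact (eventually_ge_atTop 0).mono (fun t ht => hVdecay t ht)
  have hcoord : ∀ k i, Tendsto (fun t => x t k i) atTop (𝓝 (p k i)) := by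
    intro k i
    have hsqle : ∀ t, (x t k i - p k i) ^ 2 ≤ 2 * V t := by
      intro t
      have h1 := sq_le_two_kl (p k) (x t k) (hp0 k) (hx0 t k) (hp1 k) (hx1 t k) i
      have h2 := hKL t k
      linarith
    have hsq0 : Tendsto (fun t => (x t k i - p k i) ^ 2) atTop (𝓝 0) := by
      apply tendsto_of_tendsto_of_tendsto_of_le_of_le tendsto_const_nhds
        (by simpa using hV0.const_mul 2)
      · exact fun t => sq_nonneg _
      · exact fun t => hsqle t
    have habs : Tendsto (fun t => |x t k i - p k i|) atTop (𝓝 0) := by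
      have h1 := hsq0.sqrt
      simpa [Real.sqrt_sq_eq_abs] using h1
    rw [tendsto_iff_dist_tendsto_zero]
    simpa [Real.dist_eq] using habs
  rw [tendsto_pi_nhds]
  intro k
  rw [tendsto_pi_nhds]
  intro i
  exact hcoord k i

end ODE

end QREproof

theorem Q_learning_converges_to_unique_QRE_of_sufficient_exploration
    {N : ℕ} {n : Fin N → ℕ} (hn : ∀ k, 0 < n k)
    (rPure : ∀ k : Fin N, Fin (n k) → (∀ l : {l : Fin N // l ≠ k}, Fin (n l.1)) → ℝ)
    (δ : ℝ)
    -- δ is the influence bound: it bounds the change in reward caused by a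
    -- deviation of a single opponent
    (hδ : ∀ (k : Fin N) (i : Fin (n k)) (s s' : ∀ l : {l : Fin N // l ≠ k}, Fin (n l.1)),
      (∃ l, ∀ m, m ≠ l → s m = s' m) → |rPure k i s - rPure k i s'| ≤ δ)
    (T : Fin N → ℝ) (hT0 : ∀ k, 0 < T k)
    (hT : ∀ k, δ * ((N : ℝ) - 1) < T k) :
    ∃ xbar : Strat n, IsQRE (mixedReward rPure) T xbar ∧
      (∀ y, IsQRE (mixedReward rPure) T y → y = xbar) ∧
      ∀ x : ℝ → Strat n, QLSolution (mixedReward rPure) T x →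
        Tendsto x atTop (𝓝 xbar) := by
  classical
  rcases Nat.eq_zero_or_pos N with hN0 | hN
  · -- trivial case N = 0
    subst hN0
    refine ⟨fun k => k.elim0, ⟨fun k => k.elim0, fun k => k.elim0⟩, fun y _ => ?_, fun x _ => ?_⟩
    · funext k; exact k.elim0
    · have hxc : x = fun _ => (fun k => k.elim0) :=
        funext (fun t => funext (fun k => k.elim0))
      rw [hxc]
      exact tendsto_const_nhds
  · -- main case N ≥ 1
    set δ' : ℝ := max δ 0 with hδ'def
    have hδ'0 : 0 ≤ δ' := le_max_right _ _
    have hδ' : ∀ (k : Fin N) (i : Fin (n k)) (s s' : ∀ l : {l : Fin N // l ≠ k}, Fin (n l.1)),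
        (∃ l, ∀ m, m ≠ l → s m = s' m) → |rPure k i s - rPure k i s'| ≤ δ' :=
      fun k i s s' h => le_trans (hδ k i s s' h) (le_max_left _ _)
    have hT' : ∀ k, δ' * ((N : ℝ) - 1) < T k := by
      intro k
      rcases le_or_gt N 1 with h1 | h2
      · have hN1 : N = 1 := le_antisymm h1 hN
        have : ((N : ℝ) - 1) = 0 := by rw [hN1]; norm_num
        rw [this, mul_zero]
        exact hT0 k
      · have hδnn : 0 ≤ δ := by
          set k0 : Fin N := ⟨0, hN⟩ with hk0def
          set l0 : Fin N := ⟨1, h2⟩ with hl0def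
          have hne : l0 ≠ k0 := by
            simp only [hk0def, hl0def, Ne, Fin.mk.injEq]
            norm_num
          have hs : ∀ l : {l : Fin N // l ≠ k0}, Fin (n l.1) := fun l => ⟨0, hn l.1⟩
          have hi : Fin (n k0) := ⟨0, hn k0⟩
          have h3 := hδ k0 hi hs hs ⟨⟨l0, hne⟩, fun m _ => rfl⟩
          simpa using h3
        have hmax : δ' = δ := max_eq_left hδnn
        rw [hmax]
        exact hT k
    haveI : Nonempty (Fin N) := ⟨⟨0, hN⟩⟩
    have hNR : (0:ℝ) ≤ (N : ℝ) - 1 := by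
      have h1 : (1:ℝ) ≤ (N:ℝ) := by exact_mod_cast hN
      linarith
    set Tm : ℝ := Finset.univ.inf' Finset.univ_nonempty T with hTmdef
    have hTmle : ∀ k, Tm ≤ T k := fun k => Finset.inf'_le _ (Finset.mem_univ k)
    obtain ⟨km, -, hkm⟩ := Finset.exists_mem_eq_inf' (Finset.univ_nonempty (α := Fin N)) T
    have hTmpos : 0 < Tm := by rw [hTmdef, hkm]; exact hT0 km
    set q : ℝ := δ' * ((N : ℝ) - 1) / Tm with hqdef
    have hq0 : 0 ≤ q := div_nonneg (mul_nonneg hδ'0 hNR) hTmpos.le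
    have hq1 : q < 1 := by
      rw [hqdef, div_lt_one hTmpos, hTmdef, hkm]
      exact hT' km
    set B : Strat n → Strat n := QREproof.Bmap rPure T with hBdef
    set x0 : Strat n := fun k _ => ((n k : ℝ))⁻¹ with hx0def
    have hx0S : (∀ k i, 0 ≤ x0 k i) ∧ (∀ k, ∑ i, x0 k i = 1) := by
      constructor
      · intro k i
        simp only [hx0def]
        positivity
      · intro k
        simp only [hx0def]
        rw [Finset.sum_const, Finset.card_univ, Fintype.card_fin, nsmul_eq_mul]
        rw [mul_inv_cancel₀]
        exact Nat.cast_ne_zero.2 (hn k).ne'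
    set seq : ℕ → Strat n := fun m => B^[m] x0 with hseqdef
    have hseqsucc : ∀ m, seq (m + 1) = B (seq m) := by
      intro m
      simp only [hseqdef]
      rw [Function.iterate_succ_apply']
    have hseqS : ∀ m, (∀ k i, 0 ≤ seq m k i) ∧ (∀ k, ∑ i, seq m k i = 1) := by
      intro m
      induction m with
      | zero => exact hx0S
      | succ m _ =>
          rw [hseqsucc m]
          exact ⟨fun k i => (QREproof.Bmap_pos rPure T hn (seq m) k i).le,
            fun k => QREproof.Bmap_sum rPure T hn (seq m) k⟩
    set D : Strat n → Strat n → ℝ := fun u v => ∑ k, ∑ i, |u k i - v k i| with hDdef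
    have hDnn : ∀ u v, 0 ≤ D u v := fun u v =>
      Finset.sum_nonneg (fun k _ => Finset.sum_nonneg (fun i _ => abs_nonneg _))
    have hcontr : ∀ u v, (∀ k i, 0 ≤ u k i) → (∀ k, ∑ i, u k i = 1)
        → (∀ k i, 0 ≤ v k i) → (∀ k, ∑ i, v k i = 1)
        → D (B u) (B v) ≤ q * D u v := by
      intro u v hu0 hu1 hv0 hv1
      have := QREproof.Bmap_contract rPure T hn δ' hδ'0 hδ' hT0 Tm hTmpos hTmle
        u v hu0 hu1 hv0 hv1
      calc D (B u) (B v) ≤ (δ' * ((N:ℝ) - 1) / Tm) * D u v := this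
        _ = q * D u v := by rw [hqdef]
    have hgeom : ∀ m, D (seq m) (seq (m + 1)) ≤ q ^ m * D (seq 0) (seq 1) := by
      intro m
      induction m with
      | zero => simp
      | succ m IH =>
          have h1 : D (seq (m + 1)) (seq (m + 2)) ≤ q * D (seq m) (seq (m + 1)) := by
            have heq : D (seq (m + 1)) (seq (m + 2)) = D (B (seq m)) (B (seq (m + 1))) := by
              rw [← hseqsucc m, ← hseqsucc (m + 1)]
            rw [heq]
            exact hcontr _ _ (hseqS m).1 (hseqS m).2 (hseqS (m + 1)).1 (hseqS (m + 1)).2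
          calc D (seq (m + 1)) (seq (m + 1 + 1)) ≤ q * D (seq m) (seq (m + 1)) := h1
            _ ≤ q * (q ^ m * D (seq 0) (seq 1)) := mul_le_mul_of_nonneg_left IH hq0
            _ = q ^ (m + 1) * D (seq 0) (seq 1) := by ring
    have hcoordD : ∀ (u v : Strat n) (k : Fin N) (i : Fin (n k)), |u k i - v k i| ≤ D u v := by
      intro u v k i
      have h1 : |u k i - v k i| ≤ ∑ i, |u k i - v k i| :=
        Finset.single_le_sum (f := fun i => |u k i - v k i|)
          (fun j _ => abs_nonneg _) (Finset.mem_univ i)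
      have h2 : ∑ i, |u k i - v k i| ≤ D u v :=
        Finset.single_le_sum (f := fun k => ∑ i, |u k i - v k i|)
          (fun l _ => Finset.sum_nonneg (fun j _ => abs_nonneg _)) (Finset.mem_univ k)
      linarith
    have hcauchy : ∀ k i, ∃ L, Tendsto (fun m => seq m k i) atTop (𝓝 L) := by
      intro k i
      have hC : CauchySeq (fun m => seq m k i) := by
        apply cauchySeq_of_le_geometric q (D (seq 0) (seq 1)) hq1
        intro m
        rw [Real.dist_eq]
        calc |seq m k i - seq (m + 1) k i| ≤ D (seq m) (seq (m + 1)) := hcoordD _ _ k i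
          _ ≤ q ^ m * D (seq 0) (seq 1) := hgeom m
          _ = D (seq 0) (seq 1) * q ^ m := by ring
      exact cauchySeq_tendsto_of_complete hC
    choose xb hxb using hcauchy
    have hxbten : Tendsto seq atTop (𝓝 xb) :=
      tendsto_pi_nhds.2 (fun k => tendsto_pi_nhds.2 (fun i => hxb k i))
    have hxb0 : ∀ k i, 0 ≤ xb k i := fun k i =>
      ge_of_tendsto' (hxb k i) (fun m => (hseqS m).1 k i)
    have hxb1 : ∀ k, ∑ i, xb k i = 1 := by
      intro k
      have h1 : Tendsto (fun m => ∑ i, seq m k i) atTop (𝓝 (∑ i, xb k i)) :=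
        tendsto_finset_sum _ (fun i _ => hxb k i)
      have h2 : (fun m => ∑ i, seq m k i) = fun _ => (1:ℝ) :=
        funext (fun m => (hseqS m).2 k)
      rw [h2] at h1
      exact tendsto_nhds_unique h1 tendsto_const_nhds
    have hfix : B xb = xb := by
      have h1 : Tendsto (fun m => B (seq m)) atTop (𝓝 (B xb)) := by
        apply tendsto_pi_nhds.2
        intro k
        apply tendsto_pi_nhds.2
        intro i
        exact ((QREproof.Bmap_continuous rPure T k i).tendsto xb).comp hxbten
      have h2 : Tendsto (fun m => B (seq m)) atTop (𝓝 xb) := by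
        have he : (fun m => B (seq m)) = fun m => seq (m + 1) :=
          funext (fun m => (hseqsucc m).symm)
        rw [he]
        exact hxbten.comp (tendsto_add_atTop_nat 1)
      exact tendsto_nhds_unique h1 h2
    have hxbpos : ∀ k i, 0 < xb k i := by
      intro k i
      rw [← hfix]
      exact QREproof.Bmap_pos rPure T hn xb k i
    have hQREeq : ∀ k i, xb k i = Real.exp (mixedReward rPure xb k i / T k)
        / ∑ j, Real.exp (mixedReward rPure xb k j / T k) := by
      intro k i
      exact (congrFun (congrFun hfix k) i).symm
    have hQRE : IsQRE (mixedReward rPure) T xb := by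
      constructor
      · intro k
        exact ⟨hxb0 k, hxb1 k⟩
      · exact hQREeq
    refine ⟨xb, hQRE, ?_, ?_⟩
    · intro y hy
      have hy0 : ∀ k i, 0 ≤ y k i := fun k i => (hy.1 k).1 i
      have hy1 : ∀ k, ∑ i, y k i = 1 := fun k => (hy.1 k).2
      have hyfix : B y = y := by
        funext k i
        exact (hy.2 k i).symm
      have hd := hcontr y xb hy0 hy1 hxb0 hxb1
      rw [hyfix, hfix] at hd
      have hD0 : D y xb = 0 := by nlinarith [hDnn y xb, hd, hq1]
      funext k i
      have h1 := hcoordD y xb k i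
      rw [hD0] at h1
      have h2 := abs_nonneg (y k i - xb k i)
      have h3 : |y k i - xb k i| = 0 := le_antisymm h1 h2
      have h4 := abs_eq_zero.1 h3
      linarith
    · intro x hx
      exact QREproof.converge hN hn rPure δ' hδ'0 hδ' T hT0 hT' xb hxbpos hxb1 hQREeq
        x hx.1 hx.2
end
end

section
/- If the game Γ is weighted monotone, then for any exploration rates T_k > 0 the game has a unique Quantal Response Equilibrium x̄, and every interior solution x(t) of the smooth Q-Learning dynamics converges to x̄ as t → ∞. -/
/-
STATEMENT 1: If the game Γ is weighted monotone, then for any exploration rates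
T_k > 0 the game has a unique Quantal Response Equilibrium x̄, and every interior
solution x(t) of the smooth Q-Learning dynamics converges to x̄ as t → ∞.
-/

open Filter Topology

noncomputable section

section AuxQRE
open Real Finset

section Helpers

lemma mono_of_hasDerivAt {f f' : ℝ → ℝ} {a b : ℝ}
    (hd : ∀ x ∈ Set.Icc a b, HasDerivAt f (f' x) x)
    (h' : ∀ x ∈ Set.Ioo a b, 0 ≤ f' x) (hab : a ≤ b) : f a ≤ f b := by
  have hm : MonotoneOn f (Set.Icc a b) := by
    apply monotoneOn_of_deriv_nonneg (convex_Icc a b)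
      (fun x hx => (hd x hx).continuousAt.continuousWithinAt)
    · intro x hx
      rw [interior_Icc] at hx
      exact ((hd x (Set.mem_Icc_of_Ioo hx)).differentiableAt).differentiableWithinAt
    · intro x hx
      rw [interior_Icc] at hx
      rw [(hd x (Set.mem_Icc_of_Ioo hx)).deriv]
      exact h' x hx
  exact hm (Set.left_mem_Icc.2 hab) (Set.right_mem_Icc.2 hab) hab

lemma anti_of_hasDerivAt {f f' : ℝ → ℝ} {a b : ℝ}
    (hd : ∀ x ∈ Set.Icc a b, HasDerivAt f (f' x) x)
    (h' : ∀ x ∈ Set.Ioo a b, f' x ≤ 0) (hab : a ≤ b) : f b ≤ f a := by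
  have hm : AntitoneOn f (Set.Icc a b) := by
    apply antitoneOn_of_deriv_nonpos (convex_Icc a b)
      (fun x hx => (hd x hx).continuousAt.continuousWithinAt)
    · intro x hx
      rw [interior_Icc] at hx
      exact ((hd x (Set.mem_Icc_of_Ioo hx)).differentiableAt).differentiableWithinAt
    · intro x hx
      rw [interior_Icc] at hx
      rw [(hd x (Set.mem_Icc_of_Ioo hx)).deriv]
      exact h' x hx
  exact hm (Set.left_mem_Icc.2 hab) (Set.right_mem_Icc.2 hab) hab

/-- Per-coordinate Pinsker-type inequality. -/
lemma klCoord {p q : ℝ} (hp : 0 ≤ p) (hp1 : p ≤ 1) (hq : 0 < q) (hq1 : q ≤ 1) :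
    (p - q)^2/2 ≤ p * Real.log p - p * Real.log q + q - p := by
  rcases eq_or_lt_of_le hp with h0 | hp0
  · simp only [← h0, zero_mul, Real.log_zero, mul_zero]
    nlinarith
  · set g : ℝ → ℝ := fun y => (p * Real.log p - p * Real.log y) + (y - p) - (p - y)^2/2 with hgdef
    have hderiv : ∀ y, 0 < y → HasDerivAt g ((y - p) * (1 - y) / y) y := by
      intro y hy
      have h1 : HasDerivAt (fun y : ℝ => p * Real.log p - p * Real.log y) (-(p * y⁻¹)) y :=
        ((Real.hasDerivAt_log (ne_of_gt hy)).const_mul p).const_sub (p * Real.log p)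
      have h2 : HasDerivAt (fun y : ℝ => y - p) (1:ℝ) y := (hasDerivAt_id y).sub_const p
      have h3 : HasDerivAt (fun y : ℝ => p - y) (-1 : ℝ) y := (hasDerivAt_id y).const_sub p
      have h4 := ((h3.pow 2).div_const 2)
      have H := (h1.add h2).sub h4
      refine H.congr_deriv ?_
      norm_num
      field_simp
      ring
    have hgp : g p = 0 := by simp [hgdef]
    have key : 0 ≤ g q := by
      rcases le_total q p with hqp | hpq
      · have := anti_of_hasDerivAt (f' := fun y => (y - p) * (1 - y) / y)
          (a := q) (b := p) (fun x hx => hderiv x (lt_of_lt_of_le hq hx.1))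
          (fun x hx => by
            have hx0 : 0 < x := lt_of_lt_of_le hq (le_of_lt hx.1)
            apply div_nonpos_of_nonpos_of_nonneg _ (le_of_lt hx0)
            apply mul_nonpos_of_nonpos_of_nonneg <;> nlinarith [hx.1, hx.2]) hqp
        rw [hgp] at this; exact this
      · have := mono_of_hasDerivAt (f' := fun y => (y - p) * (1 - y) / y)
          (a := p) (b := q) (fun x hx => hderiv x (lt_of_lt_of_le hp0 hx.1))
          (fun x hx => by
            have hx0 : 0 < x := lt_of_lt_of_le hp0 (le_of_lt hx.1)
            apply div_nonneg _ (le_of_lt hx0)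
            apply mul_nonneg <;> nlinarith [hx.1, hx.2]) hpq
        rw [hgp] at this; exact this
    rw [hgdef] at key
    simp only at key
    linarith

end Helpers


/-- negative entropy -/
def ent {d : ℕ} (p : Fin d → ℝ) : ℝ := ∑ i, p i * Real.log (p i)

/-- KL divergence -/
def kl {d : ℕ} (p q : Fin d → ℝ) : ℝ :=
  ∑ i, (p i * Real.log (p i) - p i * Real.log (q i))

lemma coord_le_one {d : ℕ} {p : Fin d → ℝ} (hp : ∀ i, 0 ≤ p i) (h1 : ∑ i, p i = 1) (i : Fin d) :
    p i ≤ 1 := by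
  rw [← h1]
  exact Finset.single_le_sum (fun j _ => hp j) (Finset.mem_univ i)

lemma kl_ge_sq' {d : ℕ} {p q : Fin d → ℝ} (hp : ∀ i, 0 ≤ p i) (hp1 : ∑ i, p i = 1)
    (hq : ∀ i, 0 < q i) (hq1 : ∑ i, q i = 1) :
    (∑ i, (p i - q i)^2)/2 ≤ kl p q := by
  have h : ∀ i, (p i - q i)^2/2 ≤ (p i * Real.log (p i) - p i * Real.log (q i)) + q i - p i :=
    fun i => klCoord (hp i) (coord_le_one hp hp1 i) (hq i)
      (coord_le_one (fun j => le_of_lt (hq j)) hq1 i)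
  have hs := Finset.sum_le_sum (fun i (_ : i ∈ Finset.univ) => h i)
  rw [Finset.sum_div]
  calc ∑ i, (p i - q i)^2/2
      ≤ ∑ i, ((p i * Real.log (p i) - p i * Real.log (q i)) + q i - p i) := hs
    _ = kl p q + (∑ i, q i) - (∑ i, p i) := by
        rw [kl, Finset.sum_sub_distrib, Finset.sum_add_distrib, Finset.sum_sub_distrib]
    _ = kl p q := by rw [hp1, hq1]; ring

lemma kl_nonneg {d : ℕ} {p q : Fin d → ℝ} (hp : ∀ i, 0 ≤ p i) (hp1 : ∑ i, p i = 1)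
    (hq : ∀ i, 0 < q i) (hq1 : ∑ i, q i = 1) : 0 ≤ kl p q := by
  refine le_trans ?_ (kl_ge_sq' hp hp1 hq hq1)
  have : (0:ℝ) ≤ ∑ i, (p i - q i)^2 := Finset.sum_nonneg (fun i _ => sq_nonneg _)
  linarith

/-- entropy lower bound : ent ≥ 1 - d -/
lemma ent_lb {d : ℕ} {q : Fin d → ℝ} (hq : ∀ i, 0 < q i) (hq1 : ∑ i, q i = 1) :
    1 - (d : ℝ) ≤ ent q := by
  have h : ∀ i, q i - 1 ≤ q i * Real.log (q i) := by
    intro i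
    have hlog : Real.log (q i)⁻¹ ≤ (q i)⁻¹ - 1 := Real.log_le_sub_one_of_pos (inv_pos.2 (hq i))
    rw [Real.log_inv] at hlog
    have := mul_le_mul_of_nonneg_left hlog (le_of_lt (hq i))
    have h2 : q i * ((q i)⁻¹ - 1) = 1 - q i := by
      rw [mul_sub, mul_inv_cancel₀ (ne_of_gt (hq i))]; ring
    rw [h2] at this
    nlinarith
  calc 1 - (d:ℝ) = ∑ i : Fin d, (q i - 1) := by
        rw [Finset.sum_sub_distrib, hq1]; simp
    _ ≤ ent q := Finset.sum_le_sum (fun i _ => h i)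

/-- Gibbs variational identity -/
lemma gibbs_id {d : ℕ} {p : Fin d → ℝ} {a : Fin d → ℝ} {T : ℝ} (hT : 0 < T)
    (hp1 : ∑ i, p i = 1) :
    ∑ i, p i * a i - T * ent p
      = T * Real.log (∑ j, Real.exp (a j / T))
        - T * kl p (fun i => Real.exp (a i / T) / ∑ j, Real.exp (a j / T)) := by
  have hd : 0 < d := by
    by_contra h
    push_neg at h
    interval_cases d
    · simp at hp1
  haveI : Nonempty (Fin d) := Fin.pos_iff_nonempty.mp hd
  have hZ : 0 < ∑ j, Real.exp (a j / T) :=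
    Finset.sum_pos (fun j _ => Real.exp_pos _) Finset.univ_nonempty
  have hlog : ∀ i, Real.log (Real.exp (a i / T) / ∑ j, Real.exp (a j / T))
      = a i / T - Real.log (∑ j, Real.exp (a j / T)) := by
    intro i
    rw [Real.log_div (by positivity) (ne_of_gt hZ), Real.log_exp]
  rw [kl, ent]
  have : ∀ i, p i * Real.log (p i) - p i * Real.log (Real.exp (a i / T) / ∑ j, Real.exp (a j / T))
      = p i * Real.log (p i) - p i * (a i / T) + p i * Real.log (∑ j, Real.exp (a j / T)) := by
    intro i; rw [hlog i]; ring
  rw [Finset.sum_congr rfl (fun i _ => this i)]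
  rw [Finset.sum_add_distrib, Finset.sum_sub_distrib, ← Finset.sum_mul, hp1]
  have : ∑ i, p i * (a i / T) = (∑ i, p i * a i) / T := by
    rw [Finset.sum_div]; congr 1; ext i; ring
  rw [this]
  field_simp
  ring

/-- exp quadratic bound -/
lemma expQuad {b : ℝ} (hb : |b| ≤ 1) : Real.exp b ≤ 1 + b + b^2 := by
  have h := Real.exp_bound hb (by norm_num : 0 < 2)
  have h2 : ∑ i ∈ Finset.range 2, b ^ i / (Nat.factorial i : ℝ) = 1 + b := by
    simp [Finset.sum_range_succ, Nat.factorial]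
  rw [h2] at h
  have := abs_le.1 h
  have h4 : |b|^2 = b^2 := sq_abs b
  have h5 : ((Nat.succ 2 : ℕ) : ℝ) / ((Nat.factorial 2 : ℕ) * (2:ℕ)) = 3/4 := by
    norm_num [Nat.factorial]
  rw [h4, h5] at this
  nlinarith [this.2, sq_nonneg b]



/-- Main per-player step estimate for the entropic mirror iteration. -/
lemma step_main {d : ℕ} (q a z : Fin d → ℝ) (lam T M L R : ℝ)
    (hq : ∀ i, 0 < q i) (hq1 : ∑ i, q i = 1)
    (hz : ∀ i, 0 ≤ z i) (hz1 : ∑ i, z i = 1)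
    (hlam : 0 < lam) (hT : 0 < T) (hlamT : lam * T ≤ 1)
    (hA : ∀ i, |a i| ≤ R) (hδ : ∀ i, Real.exp (-L) ≤ q i)
    (hM : ∀ i, |lam * (a i - T * Real.log (q i))| ≤ lam * M) (hM1 : lam * M ≤ 1)
    (hconst : 2*R + T*(d:ℝ) + lam*M^2 ≤ T*L) :
    (∀ i, 0 < (fun i => q i * Real.exp (lam * (a i - T * Real.log (q i)))
        / (∑ j, q j * Real.exp (lam * (a j - T * Real.log (q j))))) i) ∧
    (∑ i, q i * Real.exp (lam * (a i - T * Real.log (q i)))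
        / (∑ j, q j * Real.exp (lam * (a j - T * Real.log (q j)))) = 1) ∧
    (∀ i, Real.exp (-L) ≤ q i * Real.exp (lam * (a i - T * Real.log (q i)))
        / (∑ j, q j * Real.exp (lam * (a j - T * Real.log (q j))))) ∧
    kl z (fun i => q i * Real.exp (lam * (a i - T * Real.log (q i)))
        / (∑ j, q j * Real.exp (lam * (a j - T * Real.log (q j)))))
      ≤ kl z q + lam * ((∑ i, (q i - z i) * a i) + T * (ent z - ent q)) + lam^2 * M^2 := by
  have hd : 0 < d := by
    by_contra h
    push_neg at h
    interval_cases d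
    · simp at hq1
  haveI : Nonempty (Fin d) := Fin.pos_iff_nonempty.mp hd
  set b : Fin d → ℝ := fun i => lam * (a i - T * Real.log (q i)) with hbdef
  set Z : ℝ := ∑ j, q j * Real.exp (b j) with hZdef
  have hZpos : 0 < Z :=
    Finset.sum_pos (fun j _ => mul_pos (hq j) (Real.exp_pos _)) Finset.univ_nonempty
  set p : Fin d → ℝ := fun i => q i * Real.exp (b i) / Z with hpdef
  have hppos : ∀ i, 0 < p i := fun i => div_pos (mul_pos (hq i) (Real.exp_pos _)) hZpos
  have hpsum : ∑ i, p i = 1 := by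
    rw [hpdef]
    simp only
    rw [← Finset.sum_div, ← hZdef, div_self (ne_of_gt hZpos)]
  -- |b i| ≤ 1
  have hb1 : ∀ i, |b i| ≤ 1 := fun i => le_trans (hM i) hM1
  -- Z upper bound
  have hqb : ∀ i, q i * b i ^ 2 ≤ q i * (lam * M) ^ 2 := by
    intro i
    apply mul_le_mul_of_nonneg_left _ (le_of_lt (hq i))
    rw [← sq_abs (b i)]
    apply pow_le_pow_left₀ (abs_nonneg _) (hM i) 2
  have hZub : Z ≤ 1 + (∑ j, q j * b j) + lam^2 * M^2 := by
    calc Z ≤ ∑ j, q j * (1 + b j + (b j)^2) := by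
          apply Finset.sum_le_sum
          intro j _
          exact mul_le_mul_of_nonneg_left (expQuad (hb1 j)) (le_of_lt (hq j))
      _ = (∑ j, q j) + (∑ j, q j * b j) + ∑ j, q j * (b j)^2 := by
          rw [← Finset.sum_add_distrib, ← Finset.sum_add_distrib]
          exact Finset.sum_congr rfl (fun j _ => by ring)
      _ ≤ 1 + (∑ j, q j * b j) + lam^2 * M^2 := by
          rw [hq1]
          have : ∑ j, q j * (b j)^2 ≤ ∑ j, q j * (lam*M)^2 :=
            Finset.sum_le_sum (fun j _ => hqb j)
          have h2 : ∑ j, q j * (lam*M)^2 = (lam*M)^2 := by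
            rw [← Finset.sum_mul, hq1, one_mul]
          rw [h2] at this
          have h3 : (lam*M)^2 = lam^2*M^2 := by ring
          rw [h3] at this
          linarith
  have hlogZ : Real.log Z ≤ (∑ j, q j * b j) + lam^2 * M^2 := by
    have := Real.log_le_sub_one_of_pos hZpos
    linarith
  -- log p formula
  have hlogp : ∀ i, Real.log (p i) = Real.log (q i) + b i - Real.log Z := by
    intro i
    rw [hpdef]
    simp only
    rw [Real.log_div (ne_of_gt (mul_pos (hq i) (Real.exp_pos _))) (ne_of_gt hZpos),
      Real.log_mul (ne_of_gt (hq i)) (ne_of_gt (Real.exp_pos _)), Real.log_exp]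
  refine ⟨hppos, hpsum, ?_, ?_⟩
  · -- lower bound p i ≥ exp (-L)
    intro i
    have hentq : 1 - (d:ℝ) ≤ ent q := ent_lb hq hq1
    have hqa : ∑ j, q j * a j ≤ R := by
      calc ∑ j, q j * a j ≤ ∑ j, q j * R := by
            apply Finset.sum_le_sum
            intro j _
            exact mul_le_mul_of_nonneg_left (le_trans (le_abs_self _) (hA j)) (le_of_lt (hq j))
        _ = R := by rw [← Finset.sum_mul, hq1, one_mul]
    have hqbval : ∑ j, q j * b j = lam * ((∑ j, q j * a j) - T * ent q) := by
      have he : ∀ j, q j * b j = lam * (q j * a j) - lam * T * (q j * Real.log (q j)) := by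
        intro j; rw [hbdef]; ring
      rw [Finset.sum_congr rfl (fun j _ => he j), Finset.sum_sub_distrib,
        ← Finset.mul_sum, ← Finset.mul_sum, ent]
      ring
    have hlogq_lb : -L ≤ Real.log (q i) := by
      have := hδ i
      calc -L = Real.log (Real.exp (-L)) := (Real.log_exp _).symm
        _ ≤ Real.log (q i) := Real.log_le_log (Real.exp_pos _) this
    have hlogq_np : Real.log (q i) ≤ 0 :=
      Real.log_nonpos (le_of_lt (hq i)) (by
        rw [← hq1]
        exact Finset.single_le_sum (fun j _ => le_of_lt (hq j)) (Finset.mem_univ i))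
    have key : -L ≤ Real.log (p i) := by
      rw [hlogp i]
      have hai : -R ≤ a i := neg_le_of_abs_le (hA i)
      have h1 : b i - (∑ j, q j * b j) ≥ lam * (-2*R + T*(1 - d) - T * Real.log (q i)) := by
        rw [hbdef, hqbval]
        simp only
        have : lam * (a i - T * Real.log (q i)) - lam * ((∑ j, q j * a j) - T * ent q)
            = lam * ((a i - ∑ j, q j * a j) + T * ent q - T * Real.log (q i)) := by ring
        rw [this]
        apply mul_le_mul_of_nonneg_left _ (le_of_lt hlam)
        nlinarith [hentq, hqa, hai]
      have h2 : Real.log (q i) + (b i - Real.log Z) ≥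
          (1 - lam*T) * Real.log (q i) + lam * (-2*R + T*(1-d)) - lam^2*M^2 := by
        have := hlogZ
        nlinarith [h1]
      have h3 : (1 - lam*T) * Real.log (q i) ≥ (1 - lam*T) * (-L) := by
        apply mul_le_mul_of_nonneg_left hlogq_lb
        linarith
      have h4 : (1 - lam*T) * (-L) + lam * (-2*R + T*(1-d)) - lam^2*M^2 ≥ -L := by
        have hL : 0 ≤ L := by
          nlinarith [hT, hlam, sq_nonneg M, hA i, abs_nonneg (a i), hd]
        nlinarith
      linarith
    calc Real.exp (-L) ≤ Real.exp (Real.log (p i)) := Real.exp_le_exp.2 key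
      _ = p i := Real.exp_log (hppos i)
  · -- KL step inequality
    have hdiff : kl z p - kl z q = Real.log Z - ∑ i, z i * b i := by
      rw [kl, kl]
      rw [← Finset.sum_sub_distrib]
      have : ∀ i, (z i * Real.log (z i) - z i * Real.log (p i))
          - (z i * Real.log (z i) - z i * Real.log (q i))
          = z i * Real.log Z - z i * b i := by
        intro i
        rw [hlogp i]
        ring
      rw [Finset.sum_congr rfl (fun i _ => this i), Finset.sum_sub_distrib,
        ← Finset.sum_mul, hz1, one_mul]
    have hzb : ∑ i, z i * b i = lam * ((∑ i, z i * a i) - T * (ent z - kl z q)) := by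
      have hzlogq : ∑ i, z i * Real.log (q i) = ent z - kl z q := by
        rw [ent, kl, Finset.sum_sub_distrib]
        ring
      have he : ∀ i, z i * b i = lam * (z i * a i) - lam * T * (z i * Real.log (q i)) := by
        intro i; rw [hbdef]; ring
      rw [Finset.sum_congr rfl (fun i _ => he i), Finset.sum_sub_distrib,
        ← Finset.mul_sum, ← Finset.mul_sum, hzlogq]
      ring
    have hqbval : ∑ j, q j * b j = lam * ((∑ j, q j * a j) - T * ent q) := by
      have he : ∀ j, q j * b j = lam * (q j * a j) - lam * T * (q j * Real.log (q j)) := by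
        intro j; rw [hbdef]; ring
      rw [Finset.sum_congr rfl (fun j _ => he j), Finset.sum_sub_distrib,
        ← Finset.mul_sum, ← Finset.mul_sum, ent]
      ring
    have hklzq : 0 ≤ kl z q := kl_nonneg hz hz1 hq hq1
    have : kl z p - kl z q ≤ lam * ((∑ i, (q i - z i) * a i) + T * (ent z - ent q)) + lam^2*M^2 := by
      rw [hdiff]
      have h5 : Real.log Z - ∑ i, z i * b i ≤ (∑ j, q j * b j) - (∑ i, z i * b i) + lam^2*M^2 := by
        linarith [hlogZ]
      have h6 : (∑ j, q j * b j) - (∑ i, z i * b i)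
          = lam * ((∑ i, (q i - z i) * a i) + T * (ent z - ent q)) - lam * T * kl z q := by
        rw [hqbval, hzb]
        have : ∑ i, (q i - z i) * a i = (∑ j, q j * a j) - ∑ i, z i * a i := by
          rw [← Finset.sum_sub_distrib]
          exact Finset.sum_congr rfl (fun i _ => by ring)
        rw [this]
        ring
      have h7 : 0 ≤ lam * T * kl z q := by positivity
      linarith
    linarith


variable {N : ℕ} {n : Fin N → ℕ}

/-- one step of the entropic mirror iteration -/
def qstep (r : Strat n → Strat n) (T : Fin N → ℝ) (lam : ℝ) (q : Strat n) : Strat n :=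
  fun k i => q k i * Real.exp (lam * (r q k i - T k * Real.log (q k i)))
    / (∑ j, q k j * Real.exp (lam * (r q k j - T k * Real.log (q k j))))

/-- the iteration sequence -/
def qseq (r : Strat n → Strat n) (T : Fin N → ℝ) (c0 : ℝ) : ℕ → Strat n
  | 0 => fun k _ => 1/(n k)
  | (m+1) => qstep r T (c0/((m:ℝ)+1)) (qseq r T c0 m)

/-- weighted KL -/
def Dw (w : Fin N → ℝ) (z x : Strat n) : ℝ := ∑ k, w k * kl (z k) (x k)

/-- the Minty gap function -/
def Bfun (r : Strat n → Strat n) (T w : Fin N → ℝ) (z x : Strat n) : ℝ :=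
  ∑ k, w k * ((∑ i, (x k i - z k i) * r z k i) + T k * (ent (z k) - ent (x k)))


/-- Packaged constants for the existence proof. -/
structure GoodParams {N : ℕ} {n : Fin N → ℕ} (r : Strat n → Strat n) (T : Fin N → ℝ) where
  R : ℝ
  L : Fin N → ℝ
  M : Fin N → ℝ
  c0 : ℝ
  hn : ∀ k, 0 < n k
  hT : ∀ k, 0 < T k
  hR0 : 0 ≤ R
  hra : ∀ x : Strat n, JointSimplex x → ∀ k i, |r x k i| ≤ R
  hL : ∀ k, T k * L k = 3*R + T k * (n k : ℝ) + T k
  hM : ∀ k, M k = R + T k * L k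
  hc0 : 0 < c0
  hc0one : c0 ≤ 1
  hc0T : ∀ k, c0 * T k ≤ 1
  hc0M : ∀ k, c0 * M k ≤ 1
  hc0M2 : ∀ k, c0 * M k ^ 2 ≤ T k

namespace GoodParams

variable {r : Strat n → Strat n} {T : Fin N → ℝ} (P : GoodParams r T)

lemma L_lb (k : Fin N) : (n k : ℝ) + 1 ≤ P.L k := by
  have h := P.hL k
  have hTk := P.hT k
  have h2 : T k * ((n k : ℝ) + 1) ≤ T k * P.L k := by
    rw [h]; nlinarith [P.hR0]
  exact le_of_mul_le_mul_left h2 hTk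

lemma L_pos (k : Fin N) : 0 < P.L k := by
  have := P.L_lb k
  have : (0:ℝ) ≤ (n k : ℝ) := Nat.cast_nonneg _
  linarith [P.L_lb k]

lemma M_nonneg (k : Fin N) : 0 ≤ P.M k := by
  rw [P.hM k]
  have := P.hT k
  have := P.L_pos k
  nlinarith [P.hR0]

lemma lam_pos (m : ℕ) : 0 < P.c0/((m:ℝ)+1) := div_pos P.hc0 (by positivity)

lemma lam_le (m : ℕ) : P.c0/((m:ℝ)+1) ≤ P.c0 := by
  apply div_le_self (le_of_lt P.hc0)
  have : (0:ℝ) ≤ (m:ℝ) := Nat.cast_nonneg _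
  linarith

lemma qseq_invariant : ∀ m,
    (∀ k i, Real.exp (-(P.L k)) ≤ qseq r T P.c0 m k i) ∧
    (∀ k, ∑ i, qseq r T P.c0 m k i = 1) ∧
    (∀ k i, 0 < qseq r T P.c0 m k i) := by
  intro m
  induction m with
  | zero =>
    have hpos : ∀ k, (0:ℝ) < (n k : ℝ) := fun k => Nat.cast_pos.2 (P.hn k)
    refine ⟨?_, ?_, ?_⟩
    · intro k i
      show Real.exp (-(P.L k)) ≤ 1/(n k : ℝ)
      have h1 : Real.log (n k : ℝ) ≤ P.L k := by
        have := Real.log_le_sub_one_of_pos (hpos k)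
        linarith [P.L_lb k]
      calc Real.exp (-(P.L k)) ≤ Real.exp (-(Real.log (n k : ℝ))) := by
            apply Real.exp_le_exp.2; linarith
        _ = 1/(n k : ℝ) := by
            rw [Real.exp_neg, Real.exp_log (hpos k), one_div]
    · intro k
      show ∑ _i : Fin (n k), 1/(n k : ℝ) = 1
      rw [Finset.sum_const, Finset.card_univ, Fintype.card_fin, nsmul_eq_mul,
        mul_one_div, div_self (ne_of_gt (hpos k))]
    · intro k i
      show (0:ℝ) < 1/(n k : ℝ)
      exact one_div_pos.2 (hpos k)
  | succ m ih =>
    obtain ⟨hlb, hsum, hpos⟩ := ih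
    set lam := P.c0/((m:ℝ)+1) with hlamdef
    have hsimp : JointSimplex (qseq r T P.c0 m) := by
      intro k
      exact ⟨fun i => le_of_lt (hpos k i), hsum k⟩
    have key : ∀ k, _ := fun k => step_main (qseq r T P.c0 m k) (r (qseq r T P.c0 m) k)
      (qseq r T P.c0 m k) lam (T k) (P.M k) (P.L k) P.R
      (hpos k) (hsum k) (fun i => le_of_lt (hpos k i)) (hsum k)
      (P.lam_pos m) (P.hT k)
      (le_trans (mul_le_mul_of_nonneg_right (P.lam_le m) (le_of_lt (P.hT k))) (P.hc0T k))
      (hra P (qseq r T P.c0 m) hsimp k) (hlb k)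
      (by
        intro i
        rw [abs_mul, abs_of_pos (P.lam_pos m)]
        apply mul_le_mul_of_nonneg_left _ (le_of_lt (P.lam_pos m))
        rw [P.hM k]
        have h1 : |r (qseq r T P.c0 m) k i| ≤ P.R := hra P _ hsimp k i
        have h2 : |Real.log (qseq r T P.c0 m k i)| ≤ P.L k := by
          rw [abs_le]
          constructor
          · calc -(P.L k) = Real.log (Real.exp (-(P.L k))) := (Real.log_exp _).symm
              _ ≤ Real.log (qseq r T P.c0 m k i) :=
                  Real.log_le_log (Real.exp_pos _) (hlb k i)
          · have : Real.log (qseq r T P.c0 m k i) ≤ 0 := by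
              apply Real.log_nonpos (le_of_lt (hpos k i))
              rw [← hsum k]
              exact Finset.single_le_sum (fun j _ => le_of_lt (hpos k j)) (Finset.mem_univ i)
            linarith [P.L_pos k]
        calc |r (qseq r T P.c0 m) k i - T k * Real.log (qseq r T P.c0 m k i)|
            ≤ |r (qseq r T P.c0 m) k i| + |T k * Real.log (qseq r T P.c0 m k i)| := abs_sub _ _
          _ ≤ P.R + T k * P.L k := by
              have : |T k * Real.log (qseq r T P.c0 m k i)| =
                  T k * |Real.log (qseq r T P.c0 m k i)| := by
                rw [abs_mul, abs_of_pos (P.hT k)]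
              rw [this]
              have := mul_le_mul_of_nonneg_left h2 (le_of_lt (P.hT k))
              linarith)
      (le_trans (mul_le_mul_of_nonneg_right (P.lam_le m) (P.M_nonneg k)) (P.hc0M k))
      (by
        have h1 : lam * P.M k ^2 ≤ P.c0 * P.M k ^ 2 :=
          mul_le_mul_of_nonneg_right (P.lam_le m) (sq_nonneg _)
        have h2 := P.hc0M2 k
        have h3 := P.hL k
        nlinarith [P.hR0])
    refine ⟨fun k => (key k).2.2.1, fun k => (key k).2.1, fun k => (key k).1⟩


lemma qseq_simplex (m : ℕ) : JointSimplex (qseq r T P.c0 m) := by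
  obtain ⟨_, hsum, hpos⟩ := P.qseq_invariant m
  exact fun k => ⟨fun i => le_of_lt (hpos k i), hsum k⟩

lemma qseq_D_step (w : Fin N → ℝ) (hw : ∀ k, 0 ≤ w k)
    (hmono : ∀ x y : Strat n, JointSimplex x → JointSimplex y →
      0 ≤ ∑ k, w k * ∑ i, (x k i - y k i) * ((- r x k i) - (- r y k i)))
    (z : Strat n) (hz : JointSimplex z) (m : ℕ) :
    Dw w z (qseq r T P.c0 (m+1)) ≤ Dw w z (qseq r T P.c0 m)
      + (P.c0/((m:ℝ)+1)) * Bfun r T w z (qseq r T P.c0 m)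
      + (P.c0/((m:ℝ)+1))^2 * (∑ k, w k * P.M k ^ 2) := by
  obtain ⟨hlb, hsum, hpos⟩ := P.qseq_invariant m
  set lam := P.c0/((m:ℝ)+1) with hlamdef
  set q : Strat n := qseq r T P.c0 m with hqdef
  have hsimp : JointSimplex q := P.qseq_simplex m
  -- per-player inequality
  have hk : ∀ k, kl (z k) (qseq r T P.c0 (m+1) k) ≤ kl (z k) (q k)
      + lam * ((∑ i, (q k i - z k i) * r q k i) + T k * (ent (z k) - ent (q k)))
      + lam^2 * P.M k^2 := by
    intro k
    have := (step_main (q k) (r q k) (z k) lam (T k) (P.M k) (P.L k) P.R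
      (hpos k) (hsum k) (fun i => (hz k).1 i) (hz k).2
      (P.lam_pos m) (P.hT k)
      (le_trans (mul_le_mul_of_nonneg_right (P.lam_le m) (le_of_lt (P.hT k))) (P.hc0T k))
      (P.hra q hsimp k) (hlb k)
      (by
        intro i
        rw [abs_mul, abs_of_pos (P.lam_pos m)]
        apply mul_le_mul_of_nonneg_left _ (le_of_lt (P.lam_pos m))
        rw [P.hM k]
        have h1 : |r q k i| ≤ P.R := P.hra q hsimp k i
        have h2 : |Real.log (q k i)| ≤ P.L k := by
          rw [abs_le]
          constructor
          · calc -(P.L k) = Real.log (Real.exp (-(P.L k))) := (Real.log_exp _).symm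
              _ ≤ Real.log (q k i) := Real.log_le_log (Real.exp_pos _) (hlb k i)
          · have : Real.log (q k i) ≤ 0 := by
              apply Real.log_nonpos (le_of_lt (hpos k i))
              rw [← hsum k]
              exact Finset.single_le_sum (fun j _ => le_of_lt (hpos k j)) (Finset.mem_univ i)
            linarith [P.L_pos k]
        calc |r q k i - T k * Real.log (q k i)|
            ≤ |r q k i| + |T k * Real.log (q k i)| := abs_sub _ _
          _ ≤ P.R + T k * P.L k := by
              have h3 : |T k * Real.log (q k i)| = T k * |Real.log (q k i)| := by
                rw [abs_mul, abs_of_pos (P.hT k)]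
              rw [h3]
              have := mul_le_mul_of_nonneg_left h2 (le_of_lt (P.hT k))
              linarith)
      (le_trans (mul_le_mul_of_nonneg_right (P.lam_le m) (P.M_nonneg k)) (P.hc0M k))
      (by
        have h1 : lam * P.M k ^2 ≤ P.c0 * P.M k ^ 2 :=
          mul_le_mul_of_nonneg_right (P.lam_le m) (sq_nonneg _)
        have h2 := P.hc0M2 k
        have h3 := P.hL k
        nlinarith [P.hR0])).2.2.2
    exact this
  -- weighted sum
  have hsum1 : Dw w z (qseq r T P.c0 (m+1)) ≤ Dw w z q
      + lam * (∑ k, w k * ((∑ i, (q k i - z k i) * r q k i) + T k * (ent (z k) - ent (q k))))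
      + lam^2 * (∑ k, w k * P.M k ^ 2) := by
    rw [Dw, Dw]
    calc ∑ k, w k * kl (z k) (qseq r T P.c0 (m+1) k)
        ≤ ∑ k, w k * (kl (z k) (q k)
          + lam * ((∑ i, (q k i - z k i) * r q k i) + T k * (ent (z k) - ent (q k)))
          + lam^2 * P.M k^2) := by
          apply Finset.sum_le_sum
          intro k _
          exact mul_le_mul_of_nonneg_left (hk k) (hw k)
      _ = (∑ k, w k * kl (z k) (q k))
          + lam * (∑ k, w k * ((∑ i, (q k i - z k i) * r q k i)
              + T k * (ent (z k) - ent (q k))))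
          + lam^2 * (∑ k, w k * P.M k ^ 2) := by
          rw [Finset.mul_sum, Finset.mul_sum, ← Finset.sum_add_distrib,
            ← Finset.sum_add_distrib]
          exact Finset.sum_congr rfl (fun k _ => by ring)
  -- monotonicity
  have hmono2 : ∑ k, w k * ((∑ i, (q k i - z k i) * r q k i) + T k * (ent (z k) - ent (q k)))
      ≤ Bfun r T w z q := by
    have h := hmono q z hsimp hz
    have hexp : ∑ k, w k * ∑ i, (q k i - z k i) * ((- r q k i) - (- r z k i))
        = (∑ k, w k * ∑ i, (q k i - z k i) * r z k i)
          - ∑ k, w k * ∑ i, (q k i - z k i) * r q k i := by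
      rw [← Finset.sum_sub_distrib]
      apply Finset.sum_congr rfl
      intro k _
      rw [← mul_sub, ← Finset.sum_sub_distrib]
      congr 1
      exact Finset.sum_congr rfl (fun i _ => by ring)
    rw [hexp] at h
    rw [Bfun]
    have e1 : ∑ k, w k * ((∑ i, (q k i - z k i) * r q k i) + T k * (ent (z k) - ent (q k)))
        = (∑ k, w k * ∑ i, (q k i - z k i) * r q k i)
          + ∑ k, w k * (T k * (ent (z k) - ent (q k))) := by
      rw [← Finset.sum_add_distrib]
      exact Finset.sum_congr rfl (fun k _ => by ring)
    have e2 : ∑ k, w k * ((∑ i, (q k i - z k i) * r z k i) + T k * (ent (z k) - ent (q k)))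
        = (∑ k, w k * ∑ i, (q k i - z k i) * r z k i)
          + ∑ k, w k * (T k * (ent (z k) - ent (q k))) := by
      rw [← Finset.sum_add_distrib]
      exact Finset.sum_congr rfl (fun k _ => by ring)
    rw [e1, e2]
    linarith
  have hlampos := P.lam_pos m
  have := mul_le_mul_of_nonneg_left hmono2 (le_of_lt hlampos)
  linarith

lemma sum_inv_sq_le (Mb : ℕ) : ∑ m ∈ Finset.range Mb, (1/((m:ℝ)+1))^2 ≤ 2 := by
  have key : ∀ Mb : ℕ, ∑ m ∈ Finset.range Mb, (1/((m:ℝ)+1))^2 ≤ 2 - 2/((Mb:ℝ)+1) := by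
    intro Mb
    induction Mb with
    | zero => norm_num
    | succ M ih =>
      rw [Finset.sum_range_succ]
      have h1 : (0:ℝ) < (M:ℝ)+1 := by positivity
      have h2 : (0:ℝ) < (M:ℝ)+2 := by positivity
      have : (1/((M:ℝ)+1))^2 ≤ 2/((M:ℝ)+1) - 2/((M:ℝ)+2) := by
        rw [div_sub_div _ _ (ne_of_gt h1) (ne_of_gt h2), div_pow, one_pow,
          div_le_div_iff₀ (by positivity) (by positivity)]
        ring_nf
        nlinarith [sq_nonneg ((M:ℝ)+1)]
      have hcast : ((M+1 : ℕ) : ℝ) = (M:ℝ)+1 := by push_cast; ring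
      rw [hcast]
      have : 2 - 2/((M:ℝ)+1) + (1/((M:ℝ)+1))^2 ≤ 2 - 2/(((M:ℝ)+1)+1) := by
        have h3 : (M:ℝ)+1+1 = (M:ℝ)+2 := by ring
        rw [h3]
        linarith
      linarith
  have h := key Mb
  have : (0:ℝ) < 2/((Mb:ℝ)+1) := by positivity
  linarith


lemma C_nonneg (w : Fin N → ℝ) (hw : ∀ k, 0 ≤ w k) : 0 ≤ ∑ k, w k * P.M k ^ 2 :=
  Finset.sum_nonneg (fun k _ => mul_nonneg (hw k) (sq_nonneg _))

lemma Dw_nonneg (w : Fin N → ℝ) (hw : ∀ k, 0 ≤ w k) (z : Strat n) (hz : JointSimplex z)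
    (m : ℕ) : 0 ≤ Dw w z (qseq r T P.c0 m) := by
  obtain ⟨_, hsum, hpos⟩ := P.qseq_invariant m
  exact Finset.sum_nonneg (fun k _ => mul_nonneg (hw k)
    (kl_nonneg (fun i => (hz k).1 i) (hz k).2 (hpos k) (hsum k)))

lemma qseq_telescope (w : Fin N → ℝ) (hw : ∀ k, 0 ≤ w k)
    (hmono : ∀ x y : Strat n, JointSimplex x → JointSimplex y →
      0 ≤ ∑ k, w k * ∑ i, (x k i - y k i) * ((- r x k i) - (- r y k i)))
    (z : Strat n) (hz : JointSimplex z) (Mb : ℕ) :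
    -(Dw w z (qseq r T P.c0 0) + 2*P.c0^2 * (∑ k, w k * P.M k ^ 2))
      ≤ ∑ m ∈ Finset.range Mb, (P.c0/((m:ℝ)+1)) * Bfun r T w z (qseq r T P.c0 m) := by
  set C : ℝ := ∑ k, w k * P.M k ^ 2 with hCdef
  have htel : ∀ Mb : ℕ, Dw w z (qseq r T P.c0 Mb) ≤ Dw w z (qseq r T P.c0 0)
      + (∑ m ∈ Finset.range Mb, (P.c0/((m:ℝ)+1)) * Bfun r T w z (qseq r T P.c0 m))
      + (∑ m ∈ Finset.range Mb, (P.c0/((m:ℝ)+1))^2) * C := by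
    intro Mb
    induction Mb with
    | zero => simp
    | succ M ih =>
      have hstep := P.qseq_D_step w hw hmono z hz M
      rw [Finset.sum_range_succ, Finset.sum_range_succ]
      have hexp : (∑ m ∈ Finset.range M, (P.c0/((m:ℝ)+1))^2 + (P.c0/((M:ℝ)+1))^2) * C
          = (∑ m ∈ Finset.range M, (P.c0/((m:ℝ)+1))^2) * C + (P.c0/((M:ℝ)+1))^2 * C := by
        ring
      rw [hexp]
      linarith
  have h0 : 0 ≤ Dw w z (qseq r T P.c0 Mb) := P.Dw_nonneg w hw z hz Mb
  have hC0 : 0 ≤ C := P.C_nonneg w hw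
  have hs : (∑ m ∈ Finset.range Mb, (P.c0/((m:ℝ)+1))^2) ≤ 2*P.c0^2 := by
    have : ∀ m : ℕ, (P.c0/((m:ℝ)+1))^2 = P.c0^2 * (1/((m:ℝ)+1))^2 := by
      intro m; rw [div_pow, div_pow, one_pow, mul_one_div]
    rw [Finset.sum_congr rfl (fun m _ => this m), ← Finset.mul_sum]
    have := sum_inv_sq_le Mb
    nlinarith [sq_nonneg P.c0]
  have hmul : (∑ m ∈ Finset.range Mb, (P.c0/((m:ℝ)+1))^2) * C ≤ 2*P.c0^2 * C :=
    mul_le_mul_of_nonneg_right hs hC0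
  have := htel Mb
  linarith

end GoodParams

/-- normalization constant of the averaged iterates -/
def Lam (c0 : ℝ) (Mb : ℕ) : ℝ := ∑ m ∈ Finset.range Mb, c0/((m:ℝ)+1)

/-- averaged iterates -/
def xhat (r : Strat n → Strat n) (T : Fin N → ℝ) (c0 : ℝ) (Mb : ℕ) : Strat n :=
  fun k i => ∑ m ∈ Finset.range Mb, ((c0/((m:ℝ)+1))/(Lam c0 Mb)) * qseq r T c0 m k i

namespace GoodParams

variable {r : Strat n → Strat n} {T : Fin N → ℝ} (P : GoodParams r T)

lemma Lam_pos {Mb : ℕ} (h : 0 < Mb) : 0 < Lam P.c0 Mb :=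
  Finset.sum_pos (fun m _ => P.lam_pos m) (Finset.nonempty_range_iff.2 (by omega))

lemma wgt_sum {Mb : ℕ} (h : 0 < Mb) :
    ∑ m ∈ Finset.range Mb, ((P.c0/((m:ℝ)+1))/(Lam P.c0 Mb)) = 1 := by
  rw [← Finset.sum_div, ← Lam, div_self (ne_of_gt (P.Lam_pos h))]

lemma xhat_simplex {Mb : ℕ} (h : 0 < Mb) : JointSimplex (xhat r T P.c0 Mb) := by
  intro k
  obtain hLam := P.Lam_pos h
  constructor
  · intro i
    apply Finset.sum_nonneg
    intro m _
    apply mul_nonneg (div_nonneg (le_of_lt (P.lam_pos m)) (le_of_lt hLam))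
    exact le_of_lt ((P.qseq_invariant m).2.2 k i)
  · show ∑ i, ∑ m ∈ Finset.range Mb, ((P.c0/((m:ℝ)+1))/(Lam P.c0 Mb)) * qseq r T P.c0 m k i = 1
    rw [Finset.sum_comm]
    calc ∑ m ∈ Finset.range Mb, ∑ i, ((P.c0/((m:ℝ)+1))/(Lam P.c0 Mb)) * qseq r T P.c0 m k i
        = ∑ m ∈ Finset.range Mb, ((P.c0/((m:ℝ)+1))/(Lam P.c0 Mb)) := by
          apply Finset.sum_congr rfl
          intro m _
          rw [← Finset.mul_sum, (P.qseq_invariant m).2.1 k, mul_one]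
      _ = 1 := P.wgt_sum h

lemma ent_xhat_le {Mb : ℕ} (h : 0 < Mb) (k : Fin N) :
    ent (xhat r T P.c0 Mb k) ≤
      ∑ m ∈ Finset.range Mb, ((P.c0/((m:ℝ)+1))/(Lam P.c0 Mb)) * ent (qseq r T P.c0 m k) := by
  have hjen : ∀ i, xhat r T P.c0 Mb k i * Real.log (xhat r T P.c0 Mb k i)
      ≤ ∑ m ∈ Finset.range Mb, ((P.c0/((m:ℝ)+1))/(Lam P.c0 Mb))
          * (qseq r T P.c0 m k i * Real.log (qseq r T P.c0 m k i)) := by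
    intro i
    have := Real.convexOn_mul_log.map_sum_le (t := Finset.range Mb)
      (w := fun m => (P.c0/((m:ℝ)+1))/(Lam P.c0 Mb))
      (p := fun m => qseq r T P.c0 m k i)
      (fun m _ => div_nonneg (le_of_lt (P.lam_pos m)) (le_of_lt (P.Lam_pos h)))
      (P.wgt_sum h)
      (fun m _ => Set.mem_Ici.2 (le_of_lt ((P.qseq_invariant m).2.2 k i)))
    simpa [smul_eq_mul, xhat] using this
  calc ent (xhat r T P.c0 Mb k) ≤ ∑ i, ∑ m ∈ Finset.range Mb,
        ((P.c0/((m:ℝ)+1))/(Lam P.c0 Mb)) * (qseq r T P.c0 m k i * Real.log (qseq r T P.c0 m k i)) :=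
      Finset.sum_le_sum (fun i _ => hjen i)
    _ = ∑ m ∈ Finset.range Mb, ((P.c0/((m:ℝ)+1))/(Lam P.c0 Mb)) * ent (qseq r T P.c0 m k) := by
      rw [Finset.sum_comm]
      apply Finset.sum_congr rfl
      intro m _
      rw [ent, Finset.mul_sum]


lemma Bfun_xhat_ge (w : Fin N → ℝ) (hw : ∀ k, 0 ≤ w k) (z : Strat n) {Mb : ℕ} (h : 0 < Mb) :
    ∑ m ∈ Finset.range Mb, ((P.c0/((m:ℝ)+1))/(Lam P.c0 Mb)) * Bfun r T w z (qseq r T P.c0 m)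
      ≤ Bfun r T w z (xhat r T P.c0 Mb) := by
  set wgt : ℕ → ℝ := fun m => (P.c0/((m:ℝ)+1))/(Lam P.c0 Mb) with hwgt
  have hwgt0 : ∀ m, 0 ≤ wgt m := fun m =>
    div_nonneg (le_of_lt (P.lam_pos m)) (le_of_lt (P.Lam_pos h))
  set A : ℕ → Fin N → ℝ := fun m k => ∑ i, (qseq r T P.c0 m k i - z k i) * r z k i with hA
  set e : ℕ → Fin N → ℝ := fun m k => ent (qseq r T P.c0 m k) with he
  -- LHS rearranged
  have hLHS : ∑ m ∈ Finset.range Mb, wgt m * Bfun r T w z (qseq r T P.c0 m)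
      = ∑ k, (w k * (∑ m ∈ Finset.range Mb, wgt m * A m k)
          + w k * T k * (ent (z k) - ∑ m ∈ Finset.range Mb, wgt m * e m k)) := by
    have step1 : ∀ m, wgt m * Bfun r T w z (qseq r T P.c0 m)
        = ∑ k, (w k * (wgt m * A m k) + (w k * T k * ent (z k)) * wgt m
            - w k * T k * (wgt m * e m k)) := by
      intro m
      rw [Bfun, Finset.mul_sum]
      exact Finset.sum_congr rfl (fun k _ => by simp only [hA, he]; ring)
    rw [Finset.sum_congr rfl (fun m _ => step1 m), Finset.sum_comm]
    apply Finset.sum_congr rfl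
    intro k _
    rw [Finset.sum_sub_distrib, Finset.sum_add_distrib, ← Finset.mul_sum, ← Finset.mul_sum,
      ← Finset.mul_sum, P.wgt_sum h, mul_one]
    ring
  -- linear part of RHS
  have hAhat : ∀ k, ∑ i, (xhat r T P.c0 Mb k i - z k i) * r z k i
      = ∑ m ∈ Finset.range Mb, wgt m * A m k := by
    intro k
    have h1 : ∀ i, xhat r T P.c0 Mb k i - z k i
        = ∑ m ∈ Finset.range Mb, wgt m * (qseq r T P.c0 m k i - z k i) := by
      intro i
      have h2 : ∑ m ∈ Finset.range Mb, wgt m * (qseq r T P.c0 m k i - z k i)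
          = (∑ m ∈ Finset.range Mb, wgt m * qseq r T P.c0 m k i)
            - (∑ m ∈ Finset.range Mb, wgt m) * z k i := by
        rw [Finset.sum_mul, ← Finset.sum_sub_distrib]
        exact Finset.sum_congr rfl (fun m _ => by ring)
      rw [h2, P.wgt_sum h, one_mul]
      rfl
    calc ∑ i, (xhat r T P.c0 Mb k i - z k i) * r z k i
        = ∑ i, ∑ m ∈ Finset.range Mb, wgt m * ((qseq r T P.c0 m k i - z k i) * r z k i) := by
          apply Finset.sum_congr rfl
          intro i _
          rw [h1 i, Finset.sum_mul]
          exact Finset.sum_congr rfl (fun m _ => by ring)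
      _ = ∑ m ∈ Finset.range Mb, wgt m * A m k := by
          rw [Finset.sum_comm]
          exact Finset.sum_congr rfl (fun m _ => by rw [← Finset.mul_sum])
  rw [hLHS, Bfun]
  apply Finset.sum_le_sum
  intro k _
  rw [hAhat k]
  have hTk := P.hT k
  have hent := P.ent_xhat_le h k
  have : w k * T k * (ent (z k) - ∑ m ∈ Finset.range Mb, wgt m * e m k)
      ≤ w k * T k * (ent (z k) - ent (xhat r T P.c0 Mb k)) := by
    apply mul_le_mul_of_nonneg_left _ (mul_nonneg (hw k) (le_of_lt hTk))
    have : ent (xhat r T P.c0 Mb k) ≤ ∑ m ∈ Finset.range Mb, wgt m * e m k := hent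
    linarith
  have hgoal : w k * ((∑ m ∈ Finset.range Mb, wgt m * A m k)
      + T k * (ent (z k) - ent (xhat r T P.c0 Mb k)))
      = w k * (∑ m ∈ Finset.range Mb, wgt m * A m k)
        + w k * T k * (ent (z k) - ent (xhat r T P.c0 Mb k)) := by ring
  rw [hgoal]
  linarith

end GoodParams

lemma Bfun_continuous (r : Strat n → Strat n) (T w : Fin N → ℝ) (z : Strat n) :
    Continuous fun x : Strat n => Bfun r T w z x := by
  unfold Bfun ent
  apply continuous_finset_sum
  intro k _
  apply Continuous.mul continuous_const
  apply Continuous.add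
  · apply continuous_finset_sum
    intro i _
    exact (((continuous_apply i).comp (continuous_apply (A := fun k => Fin (n k) → ℝ) k)).sub continuous_const).mul
      continuous_const
  · apply Continuous.mul continuous_const
    apply Continuous.sub continuous_const
    apply continuous_finset_sum
    intro i _
    exact Real.continuous_mul_log.comp ((continuous_apply i).comp (continuous_apply (A := fun k => Fin (n k) → ℝ) k))

namespace GoodParams

variable {r : Strat n → Strat n} {T : Fin N → ℝ}

lemma exists_minty (P : GoodParams r T) (w : Fin N → ℝ) (hw : ∀ k, 0 ≤ w k)
    (hmono : ∀ x y : Strat n, JointSimplex x → JointSimplex y →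
      0 ≤ ∑ k, w k * ∑ i, (x k i - y k i) * ((- r x k i) - (- r y k i))) :
    ∃ xb : Strat n, JointSimplex xb ∧ ∀ z, JointSimplex z → 0 ≤ Bfun r T w z xb := by
  have hcomp : IsCompact {x : Strat n | JointSimplex x} := by
    have hset : {x : Strat n | JointSimplex x}
        = Set.pi Set.univ (fun k => stdSimplex ℝ (Fin (n k))) := by
      ext x
      simp [JointSimplex, Set.mem_pi]
    rw [hset]
    exact isCompact_univ_pi (fun k => isCompact_stdSimplex _ _)
  have hmem : ∀ M : ℕ, (fun M => xhat r T P.c0 (M+1)) M ∈ {x : Strat n | JointSimplex x} :=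
    fun M => P.xhat_simplex (Nat.succ_pos M)
  obtain ⟨xb, hxb, φ, hφ, hconv⟩ := hcomp.tendsto_subseq hmem
  refine ⟨xb, hxb, ?_⟩
  intro z hz
  set K : ℝ := Dw w z (qseq r T P.c0 0) + 2*P.c0^2 * (∑ k, w k * P.M k ^ 2) with hK
  have hlb : ∀ M : ℕ, -K / Lam P.c0 (M+1) ≤ Bfun r T w z (xhat r T P.c0 (M+1)) := by
    intro M
    have h1 := P.qseq_telescope w hw hmono z hz (M+1)
    have h2 := P.Bfun_xhat_ge w hw z (Nat.succ_pos M)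
    have hL := P.Lam_pos (Mb := M+1) (Nat.succ_pos M)
    have h3 : ∑ m ∈ Finset.range (M+1),
          ((P.c0/((m:ℝ)+1))/(Lam P.c0 (M+1))) * Bfun r T w z (qseq r T P.c0 m)
        = (∑ m ∈ Finset.range (M+1),
            (P.c0/((m:ℝ)+1)) * Bfun r T w z (qseq r T P.c0 m)) / Lam P.c0 (M+1) := by
      rw [Finset.sum_div]
      exact Finset.sum_congr rfl (fun m _ => by rw [div_mul_eq_mul_div])
    rw [h3] at h2
    have h4 := (div_le_div_iff_of_pos_right hL).2 h1
    linarith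
  have hΛtend : Tendsto (fun j => Lam P.c0 (φ j + 1)) atTop atTop := by
    have h1 : Tendsto (fun M => Lam P.c0 M) atTop atTop := by
      have heq : (fun M => Lam P.c0 M) = fun M => P.c0 * ∑ m ∈ Finset.range M, 1/((m:ℝ)+1) := by
        funext M
        rw [Lam, Finset.mul_sum]
        exact Finset.sum_congr rfl (fun m _ => by rw [mul_one_div])
      rw [heq]
      exact (tendsto_sum_range_one_div_nat_succ_atTop).const_mul_atTop P.hc0
    exact h1.comp ((tendsto_add_atTop_nat 1).comp hφ.tendsto_atTop)
  have hzero : Tendsto (fun j => -K / Lam P.c0 (φ j + 1)) atTop (𝓝 0) :=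
    Tendsto.div_atTop tendsto_const_nhds hΛtend
  have hBtend : Tendsto (fun j => Bfun r T w z (xhat r T P.c0 (φ j + 1))) atTop
      (𝓝 (Bfun r T w z xb)) :=
    ((Bfun_continuous r T w z).tendsto xb).comp hconv
  exact le_of_tendsto_of_tendsto' hzero hBtend (fun j => hlb (φ j))

end GoodParams

lemma kl_self {d : ℕ} (p : Fin d → ℝ) : kl p p = 0 := by
  simp [kl]

/-- A Minty solution is a QRE. -/
lemma minty_qre (hn : ∀ k, 0 < n k) (r : Strat n → Strat n) (T w : Fin N → ℝ)
    (hT : ∀ k, 0 < T k) (hw : ∀ k, 0 < w k)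
    (hr : ContinuousOn r {z : Strat n | JointSimplex z})
    (xb : Strat n) (hxb : JointSimplex xb)
    (hminty : ∀ z, JointSimplex z → 0 ≤ Bfun r T w z xb) :
    ∀ k i, xb k i = Real.exp (r xb k i / T k) / ∑ j, Real.exp (r xb k j / T k) := by
  classical
  set y : Strat n := fun k i => Real.exp (r xb k i / T k) / ∑ j, Real.exp (r xb k j / T k)
    with hy
  have hZpos : ∀ k, 0 < ∑ j, Real.exp (r xb k j / T k) := by
    intro k
    haveI : Nonempty (Fin (n k)) := Fin.pos_iff_nonempty.mp (hn k)
    exact Finset.sum_pos (fun j _ => Real.exp_pos _) Finset.univ_nonempty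
  have hypos : ∀ k i, 0 < y k i := fun k i => div_pos (Real.exp_pos _) (hZpos k)
  have hysum : ∀ k, ∑ i, y k i = 1 := by
    intro k
    rw [hy]
    simp only
    rw [← Finset.sum_div, div_self (ne_of_gt (hZpos k))]
  have hysimp : JointSimplex y := fun k => ⟨fun i => le_of_lt (hypos k i), hysum k⟩
  -- the path z t
  set zp : ℝ → Strat n := fun t k i => (1-t) * xb k i + t * y k i with hzp
  have hzmem : ∀ t ∈ Set.Ioc (0:ℝ) 1, JointSimplex (zp t) := by
    intro t ht k
    constructor
    · intro i
      have h1 : 0 ≤ 1 - t := by linarith [ht.2]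
      have h2 := (hxb k).1 i
      have h3 := hypos k i
      have := ht.1
      show 0 ≤ (1-t) * xb k i + t * y k i
      nlinarith
    · rw [hzp]
      simp only
      rw [Finset.sum_add_distrib, ← Finset.mul_sum, ← Finset.mul_sum, (hxb k).2, hysum k]
      ring
  -- G t
  set G : ℝ → ℝ := fun t => ∑ k, w k * ((∑ i, (xb k i - y k i) * r (zp t) k i)
    + T k * (ent (y k) - ent (xb k))) with hG
  have hGt : ∀ t ∈ Set.Ioc (0:ℝ) 1, 0 ≤ G t := by
    intro t ht
    have hB := hminty (zp t) (hzmem t ht)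
    rw [Bfun] at hB
    -- bound each player's term
    have hkey : ∀ k, w k * ((∑ i, (xb k i - zp t k i) * r (zp t) k i)
        + T k * (ent (zp t k) - ent (xb k)))
        ≤ t * (w k * ((∑ i, (xb k i - y k i) * r (zp t) k i)
          + T k * (ent (y k) - ent (xb k)))) := by
      intro k
      have hlin : ∑ i, (xb k i - zp t k i) * r (zp t) k i
          = t * ∑ i, (xb k i - y k i) * r (zp t) k i := by
        rw [Finset.mul_sum]
        apply Finset.sum_congr rfl
        intro i _
        rw [hzp]
        simp only
        ring
      have hent : ent (zp t k) ≤ (1-t) * ent (xb k) + t * ent (y k) := by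
        rw [ent, ent, ent, Finset.mul_sum, Finset.mul_sum, ← Finset.sum_add_distrib]
        apply Finset.sum_le_sum
        intro i _
        have := Real.convexOn_mul_log.2 (Set.mem_Ici.2 ((hxb k).1 i))
          (Set.mem_Ici.2 (le_of_lt (hypos k i))) (by linarith [ht.2] : (0:ℝ) ≤ 1 - t)
          (le_of_lt ht.1) (by ring : (1-t) + t = 1)
        simpa [smul_eq_mul] using this
      have hwk := le_of_lt (hw k)
      have hTk := le_of_lt (hT k)
      have h2 : T k * (ent (zp t k) - ent (xb k)) ≤ T k * (t * (ent (y k) - ent (xb k))) := by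
        apply mul_le_mul_of_nonneg_left _ hTk
        nlinarith [hent]
      calc w k * ((∑ i, (xb k i - zp t k i) * r (zp t) k i)
            + T k * (ent (zp t k) - ent (xb k)))
          ≤ w k * (t * (∑ i, (xb k i - y k i) * r (zp t) k i)
            + T k * (t * (ent (y k) - ent (xb k)))) := by
            apply mul_le_mul_of_nonneg_left _ hwk
            rw [hlin]
            linarith
        _ = t * (w k * ((∑ i, (xb k i - y k i) * r (zp t) k i)
            + T k * (ent (y k) - ent (xb k)))) := by ring
    have hsum : 0 ≤ t * G t := by
      calc (0:ℝ) ≤ ∑ k, w k * ((∑ i, (xb k i - zp t k i) * r (zp t) k i)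
            + T k * (ent (zp t k) - ent (xb k))) := hB
        _ ≤ ∑ k, t * (w k * ((∑ i, (xb k i - y k i) * r (zp t) k i)
            + T k * (ent (y k) - ent (xb k)))) := Finset.sum_le_sum (fun k _ => hkey k)
        _ = t * G t := by rw [hG, Finset.mul_sum]
    exact le_of_mul_le_mul_left (by linarith : t*0 ≤ t * G t) ht.1
  -- limit t → 0⁺
  have hzcont : Continuous zp := by
    apply continuous_pi
    intro k
    apply continuous_pi
    intro i
    exact ((continuous_const.sub continuous_id).mul continuous_const).add
      (continuous_id.mul continuous_const)
  have hz0 : zp 0 = xb := by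
    funext k i
    rw [hzp]
    simp
  have hztend : Tendsto zp (𝓝[Set.Ioc (0:ℝ) 1] 0) (𝓝 xb) := by
    have h1 := hzcont.continuousAt (x := (0:ℝ))
    rw [ContinuousAt, hz0] at h1
    exact h1.mono_left nhdsWithin_le_nhds
  have hrtend : Tendsto (fun t => r (zp t)) (𝓝[Set.Ioc (0:ℝ) 1] 0) (𝓝 (r xb)) := by
    have hcw : ContinuousWithinAt r {z : Strat n | JointSimplex z} xb := hr xb hxb
    apply hcw.tendsto.comp
    rw [tendsto_nhdsWithin_iff]
    exact ⟨hztend, eventually_mem_nhdsWithin.mono (fun t ht => hzmem t ht)⟩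
  set G0 : ℝ := ∑ k, w k * ((∑ i, (xb k i - y k i) * r xb k i)
    + T k * (ent (y k) - ent (xb k))) with hG0def
  have hGtend : Tendsto G (𝓝[Set.Ioc (0:ℝ) 1] 0) (𝓝 G0) := by
    rw [hG, hG0def]
    apply tendsto_finset_sum
    intro k _
    apply Tendsto.const_mul
    apply Tendsto.add _ tendsto_const_nhds
    apply tendsto_finset_sum
    intro i _
    have hcont : Continuous (fun x : Strat n => x k i) :=
      (continuous_apply i).comp (continuous_apply k)
    have hev : Tendsto (fun t => r (zp t) k i) (𝓝[Set.Ioc (0:ℝ) 1] 0) (𝓝 (r xb k i)) :=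
      (hcont.tendsto (r xb)).comp hrtend
    exact Tendsto.const_mul _ hev
  haveI hneBot : (𝓝[Set.Ioc (0:ℝ) 1] (0:ℝ)).NeBot := by
    apply mem_closure_iff_nhdsWithin_neBot.1
    rw [closure_Ioc (by norm_num : (0:ℝ) ≠ 1)]
    exact ⟨le_refl 0, by norm_num⟩
  have hG0 : 0 ≤ G0 :=
    ge_of_tendsto hGtend (eventually_mem_nhdsWithin.mono (fun t ht => hGt t ht))
  -- Gibbs identity per player
  have hid : ∀ k, (∑ i, (xb k i - y k i) * r xb k i) + T k * (ent (y k) - ent (xb k))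
      = -(T k * kl (xb k) (y k)) := by
    intro k
    have e1 : ∑ i, (xb k i - y k i) * r xb k i
        = (∑ i, xb k i * r xb k i) - ∑ i, y k i * r xb k i := by
      rw [← Finset.sum_sub_distrib]
      exact Finset.sum_congr rfl (fun i _ => by ring)
    have g1 := gibbs_id (hT k) ((hxb k).2) (a := r xb k)
    have g2 := gibbs_id (hT k) (hysum k) (a := r xb k)
    have hyk : (fun i => Real.exp (r xb k i / T k) / ∑ j, Real.exp (r xb k j / T k)) = y k := rfl
    rw [hyk] at g1 g2
    rw [kl_self] at g2
    rw [e1]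
    linear_combination g1 - g2
  have hsumle : ∑ k, w k * (T k * kl (xb k) (y k)) ≤ 0 := by
    have h1 : G0 = -∑ k, w k * (T k * kl (xb k) (y k)) := by
      rw [hG0def, ← Finset.sum_neg_distrib]
      exact Finset.sum_congr rfl (fun k _ => by rw [hid k]; ring)
    linarith [hG0, h1 ▸ hG0]
  have hnn : ∀ k ∈ Finset.univ, 0 ≤ w k * (T k * kl (xb k) (y k)) := fun k _ =>
    mul_nonneg (hw k).le (mul_nonneg (hT k).le
      (kl_nonneg (hxb k).1 (hxb k).2 (hypos k) (hysum k)))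
  have hzero : ∑ k, w k * (T k * kl (xb k) (y k)) = 0 :=
    le_antisymm hsumle (Finset.sum_nonneg hnn)
  have hkl0 : ∀ k, kl (xb k) (y k) = 0 := by
    intro k
    have h1 := (Finset.sum_eq_zero_iff_of_nonneg hnn).1 hzero k (Finset.mem_univ k)
    rcases mul_eq_zero.1 h1 with h | h
    · exact absurd h (ne_of_gt (hw k))
    rcases mul_eq_zero.1 h with h' | h'
    · exact absurd h' (ne_of_gt (hT k))
    · exact h'
  intro k i
  have hsq := kl_ge_sq' (hxb k).1 (hxb k).2 (hypos k) (hysum k)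
  rw [hkl0 k] at hsq
  have hsq0 : ∑ i, (xb k i - y k i)^2 = 0 :=
    le_antisymm (by linarith) (Finset.sum_nonneg (fun i _ => sq_nonneg _))
  have h2 := (Finset.sum_eq_zero_iff_of_nonneg (fun i _ => sq_nonneg _)).1 hsq0 i
    (Finset.mem_univ i)
  have h3 : xb k i = y k i := by nlinarith [h2]
  exact h3

/-- Existence of a QRE. -/
theorem qre_exists (hN : 0 < N) (hn : ∀ k, 0 < n k) (r : Strat n → Strat n)
    (hr : ContinuousOn r {z : Strat n | JointSimplex z})
    (T w : Fin N → ℝ) (hT : ∀ k, 0 < T k) (hw : ∀ k, 0 < w k)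
    (hmono : ∀ x y : Strat n, JointSimplex x → JointSimplex y →
      0 ≤ ∑ k, w k * ∑ i, (x k i - y k i) * ((- r x k i) - (- r y k i))) :
    ∃ xb : Strat n, JointSimplex xb ∧
      ∀ k i, xb k i = Real.exp (r xb k i / T k) / ∑ j, Real.exp (r xb k j / T k) := by
  classical
  haveI : Nonempty (Fin N) := Fin.pos_iff_nonempty.mp hN
  -- bound on r over the simplex
  have hcomp : IsCompact {x : Strat n | JointSimplex x} := by
    have hset : {x : Strat n | JointSimplex x}
        = Set.pi Set.univ (fun k => stdSimplex ℝ (Fin (n k))) := by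
      ext x
      simp [JointSimplex, Set.mem_pi]
    rw [hset]
    exact isCompact_univ_pi (fun k => isCompact_stdSimplex _ _)
  obtain ⟨C, hC⟩ := hcomp.exists_bound_of_continuousOn hr
  set R : ℝ := max C 0 with hR
  have hR0 : 0 ≤ R := le_max_right _ _
  have hra : ∀ x : Strat n, JointSimplex x → ∀ k i, |r x k i| ≤ R := by
    intro x hx k i
    have h1 : ‖r x k‖ ≤ ‖r x‖ := norm_le_pi_norm (r x) k
    have h2 : ‖r x k i‖ ≤ ‖r x k‖ := norm_le_pi_norm (r x k) i
    have h3 := hC x hx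
    rw [Real.norm_eq_abs] at h2
    calc |r x k i| ≤ ‖r x‖ := le_trans h2 h1
      _ ≤ C := h3
      _ ≤ R := le_max_left _ _
  set L : Fin N → ℝ := fun k => (3*R + T k * (n k : ℝ) + T k)/(T k) with hLdef
  set M : Fin N → ℝ := fun k => R + T k * L k with hMdef
  have hM0 : ∀ k, 0 ≤ M k := by
    intro k
    have h1 : T k * L k = 3*R + T k * (n k : ℝ) + T k := by
      have hne := ne_of_gt (hT k)
      rw [hLdef]
      field_simp
    rw [hMdef]
    simp only
    rw [h1]
    have : (0:ℝ) ≤ T k * (n k : ℝ) := mul_nonneg (hT k).le (Nat.cast_nonneg _)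
    have := (hT k).le
    linarith
  set ck : Fin N → ℝ := fun k => min (1/(T k)) (min (1/(M k + 1)) ((T k)/(M k^2 + 1)))
    with hckdef
  have hckpos : ∀ k, 0 < ck k := by
    intro k
    apply lt_min (one_div_pos.2 (hT k))
    apply lt_min (one_div_pos.2 (by linarith [hM0 k] : (0:ℝ) < M k + 1))
    exact div_pos (hT k) (by positivity)
  set c0 : ℝ := min 1 (Finset.univ.inf' Finset.univ_nonempty ck) with hc0def
  have hc0pos : 0 < c0 := by
    apply lt_min one_pos
    rw [Finset.lt_inf'_iff]
    exact fun k _ => hckpos k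
  have hc0le : ∀ k, c0 ≤ ck k := fun k =>
    le_trans (min_le_right _ _) (Finset.inf'_le _ (Finset.mem_univ k))
  have P : GoodParams r T := {
    R := R, L := L, M := M, c0 := c0,
    hn := hn, hT := hT, hR0 := hR0, hra := hra,
    hL := by
      intro k
      have hne := ne_of_gt (hT k)
      rw [hLdef]
      field_simp
    hM := fun k => rfl,
    hc0 := hc0pos,
    hc0one := min_le_left _ _,
    hc0T := by
      intro k
      have h1 : c0 ≤ 1/(T k) := le_trans (hc0le k) (min_le_left _ _)
      have h2 := mul_le_mul_of_nonneg_right h1 (hT k).le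
      rw [one_div, inv_mul_cancel₀ (ne_of_gt (hT k))] at h2
      exact h2
    hc0M := by
      intro k
      have h1 : c0 ≤ 1/(M k + 1) := le_trans (hc0le k) (le_trans (min_le_right _ _) (min_le_left _ _))
      have h2 : 0 < M k + 1 := by linarith [hM0 k]
      have h3 := mul_le_mul_of_nonneg_right h1 (hM0 k)
      calc c0 * M k ≤ (1/(M k + 1)) * M k := h3
        _ ≤ 1 := by
          rw [div_mul_eq_mul_div, div_le_one h2]
          linarith [hM0 k]
    hc0M2 := by
      intro k
      have h1 : c0 ≤ T k/(M k^2 + 1) :=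
        le_trans (hc0le k) (le_trans (min_le_right _ _) (min_le_right _ _))
      have h2 : (0:ℝ) < M k^2 + 1 := by positivity
      have h3 := mul_le_mul_of_nonneg_right h1 (sq_nonneg (M k))
      calc c0 * M k^2 ≤ (T k/(M k^2+1)) * M k^2 := h3
        _ ≤ T k := by
          rw [div_mul_eq_mul_div, div_le_iff₀ h2]
          nlinarith [sq_nonneg (M k), (hT k).le]
  }
  obtain ⟨xb, hxbs, hminty⟩ := P.exists_minty w (fun k => (hw k).le) hmono
  exact ⟨xb, hxbs, minty_qre hn r T w hT hw hr xb hxbs hminty⟩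

/-- Uniqueness of the QRE. -/
theorem qre_unique (r : Strat n → Strat n) (T w : Fin N → ℝ) (hT : ∀ k, 0 < T k)
    (hw : ∀ k, 0 < w k)
    (hmono : ∀ x y : Strat n, JointSimplex x → JointSimplex y →
      0 ≤ ∑ k, w k * ∑ i, (x k i - y k i) * ((- r x k i) - (- r y k i)))
    (x y : Strat n) (hxs : JointSimplex x) (hys : JointSimplex y)
    (hxf : ∀ k i, x k i = Real.exp (r x k i / T k) / ∑ j, Real.exp (r x k j / T k))
    (hyf : ∀ k i, y k i = Real.exp (r y k i / T k) / ∑ j, Real.exp (r y k j / T k)) :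
    x = y := by
  classical
  have hZx : ∀ k, 0 < ∑ j, Real.exp (r x k j / T k) := by
    intro k
    have hne : (Finset.univ : Finset (Fin (n k))).Nonempty := by
      by_contra h
      rw [Finset.not_nonempty_iff_eq_empty] at h
      have := (hxs k).2
      rw [h] at this
      simp at this
    exact Finset.sum_pos (fun j _ => Real.exp_pos _) hne
  have hZy : ∀ k, 0 < ∑ j, Real.exp (r y k j / T k) := by
    intro k
    have hne : (Finset.univ : Finset (Fin (n k))).Nonempty := by
      by_contra h
      rw [Finset.not_nonempty_iff_eq_empty] at h
      have := (hys k).2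
      rw [h] at this
      simp at this
    exact Finset.sum_pos (fun j _ => Real.exp_pos _) hne
  have hxpos : ∀ k i, 0 < x k i := by
    intro k i
    rw [hxf k i]
    exact div_pos (Real.exp_pos _) (hZx k)
  have hypos : ∀ k i, 0 < y k i := by
    intro k i
    rw [hyf k i]
    exact div_pos (Real.exp_pos _) (hZy k)
  have hrx : ∀ k i, r x k i = T k * Real.log (x k i) + T k * Real.log (∑ j, Real.exp (r x k j / T k)) := by
    intro k i
    have h1 : Real.log (x k i) = r x k i / T k - Real.log (∑ j, Real.exp (r x k j / T k)) := by
      rw [hxf k i, Real.log_div (ne_of_gt (Real.exp_pos _)) (ne_of_gt (hZx k)), Real.log_exp]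
    rw [h1]
    have hne : T k ≠ 0 := ne_of_gt (hT k)
    field_simp
    ring
  have hry : ∀ k i, r y k i = T k * Real.log (y k i) + T k * Real.log (∑ j, Real.exp (r y k j / T k)) := by
    intro k i
    have h1 : Real.log (y k i) = r y k i / T k - Real.log (∑ j, Real.exp (r y k j / T k)) := by
      rw [hyf k i, Real.log_div (ne_of_gt (Real.exp_pos _)) (ne_of_gt (hZy k)), Real.log_exp]
    rw [h1]
    have hne : T k ≠ 0 := ne_of_gt (hT k)
    field_simp
    ring
  have hmxy := hmono x y hxs hys
  -- rewrite the monotone sum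
  have hkey : ∀ k, ∑ i, (x k i - y k i) * ((- r x k i) - (- r y k i))
      = -(T k) * (kl (x k) (y k) + kl (y k) (x k)) := by
    intro k
    have h1 : ∀ i, (x k i - y k i) * ((- r x k i) - (- r y k i))
        = -(T k) * ((x k i - y k i) * (Real.log (x k i) - Real.log (y k i)))
          + (T k * Real.log (∑ j, Real.exp (r y k j / T k))
             - T k * Real.log (∑ j, Real.exp (r x k j / T k))) * (x k i - y k i) := by
      intro i
      rw [hrx k i, hry k i]
      ring
    rw [Finset.sum_congr rfl (fun i _ => h1 i), Finset.sum_add_distrib, ← Finset.mul_sum,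
      ← Finset.mul_sum, Finset.sum_sub_distrib, (hxs k).2, (hys k).2]
    have h2 : ∑ i, (x k i - y k i) * (Real.log (x k i) - Real.log (y k i))
        = kl (x k) (y k) + kl (y k) (x k) := by
      rw [kl, kl, ← Finset.sum_add_distrib]
      exact Finset.sum_congr rfl (fun i _ => by ring)
    rw [h2]
    ring
  rw [Finset.sum_congr rfl (fun k _ => by rw [hkey k])] at hmxy
  -- each symmetric KL is nonneg, hence all are zero
  have hterm : ∀ k ∈ Finset.univ,
      0 ≤ w k * (T k * (kl (x k) (y k) + kl (y k) (x k))) := by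
    intro k _
    apply mul_nonneg (hw k).le
    apply mul_nonneg (hT k).le
    have h1 := kl_nonneg (fun i => (hxpos k i).le) (hxs k).2 (hypos k) (hys k).2
    have h2 := kl_nonneg (fun i => (hypos k i).le) (hys k).2 (hxpos k) (hxs k).2
    linarith
  have hflip : ∑ k, w k * (-(T k) * (kl (x k) (y k) + kl (y k) (x k)))
      = -∑ k, w k * (T k * (kl (x k) (y k) + kl (y k) (x k))) := by
    rw [← Finset.sum_neg_distrib]
    exact Finset.sum_congr rfl (fun k _ => by ring)
  rw [hflip] at hmxy
  have hzero : ∑ k, w k * (T k * (kl (x k) (y k) + kl (y k) (x k))) = 0 :=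
    le_antisymm (by linarith) (Finset.sum_nonneg hterm)
  funext k i
  have h1 := (Finset.sum_eq_zero_iff_of_nonneg hterm).1 hzero k (Finset.mem_univ k)
  have hklxy := kl_nonneg (fun i => (hxpos k i).le) (hxs k).2 (hypos k) (hys k).2
  have hklyx := kl_nonneg (fun i => (hypos k i).le) (hys k).2 (hxpos k) (hxs k).2
  have hkl0 : kl (x k) (y k) = 0 := by
    rcases mul_eq_zero.1 h1 with h | h
    · exact absurd h (ne_of_gt (hw k))
    rcases mul_eq_zero.1 h with h' | h'
    · exact absurd h' (ne_of_gt (hT k))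
    · linarith
  have hsq := kl_ge_sq' (fun i => (hxpos k i).le) (hxs k).2 (hypos k) (hys k).2
  rw [hkl0] at hsq
  have hsq0 : ∑ i, (x k i - y k i)^2 = 0 :=
    le_antisymm (by linarith) (Finset.sum_nonneg (fun i _ => sq_nonneg _))
  have h2 := (Finset.sum_eq_zero_iff_of_nonneg (fun i _ => sq_nonneg _)).1 hsq0 i
    (Finset.mem_univ i)
  nlinarith [h2]

theorem ql_converges (hN : 0 < N) (r : Strat n → Strat n) (T w : Fin N → ℝ)
    (hT : ∀ k, 0 < T k) (hw : ∀ k, 0 < w k)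
    (hmono : ∀ x y : Strat n, JointSimplex x → JointSimplex y →
      0 ≤ ∑ k, w k * ∑ i, (x k i - y k i) * ((- r x k i) - (- r y k i)))
    (xb : Strat n) (hxbs : JointSimplex xb)
    (hxbf : ∀ k i, xb k i = Real.exp (r xb k i / T k) / ∑ j, Real.exp (r xb k j / T k))
    (x : ℝ → Strat n) (hint : ∀ t, JointInterior (x t))
    (hderiv : ∀ t k i, HasDerivAt (fun s => x s k i)
      (x t k i * (r (x t) k i - (∑ j, x t k j * r (x t) k j)
        - T k * (Real.log (x t k i) - ∑ j, x t k j * Real.log (x t k j)))) t) :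
    Tendsto x atTop (𝓝 xb) := by
  classical
  haveI : Nonempty (Fin N) := Fin.pos_iff_nonempty.mp hN
  have hxpos : ∀ t k i, 0 < x t k i := fun t k i => (hint t k).1 i
  have hxsum : ∀ t k, ∑ i, x t k i = 1 := fun t k => (hint t k).2
  have hxsimp : ∀ t, JointSimplex (x t) := fun t k => ⟨fun i => (hxpos t k i).le, hxsum t k⟩
  have hZb : ∀ k, 0 < ∑ j, Real.exp (r xb k j / T k) := by
    intro k
    haveI : Nonempty (Fin (n k)) := by
      by_contra h
      rw [not_nonempty_iff] at h
      have := (hxbs k).2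
      rw [Finset.univ_eq_empty, Finset.sum_empty] at this
      norm_num at this
    exact Finset.sum_pos (fun j _ => Real.exp_pos _) Finset.univ_nonempty
  have hxbpos : ∀ k i, 0 < xb k i := by
    intro k i
    rw [hxbf k i]
    exact div_pos (Real.exp_pos _) (hZb k)
  have hrxb : ∀ k i, r xb k i
      = T k * Real.log (xb k i) + T k * Real.log (∑ j, Real.exp (r xb k j / T k)) := by
    intro k i
    have h1 : Real.log (xb k i) = r xb k i / T k - Real.log (∑ j, Real.exp (r xb k j / T k)) := by
      rw [hxbf k i, Real.log_div (ne_of_gt (Real.exp_pos _)) (ne_of_gt (hZb k)), Real.log_exp]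
    rw [h1]
    have hne : T k ≠ 0 := ne_of_gt (hT k)
    field_simp
    ring
  -- the Lyapunov function
  set g : ℝ → ∀ k, Fin (n k) → ℝ := fun t k i => r (x t) k i - (∑ j, x t k j * r (x t) k j)
    - T k * (Real.log (x t k i) - ∑ j, x t k j * Real.log (x t k j)) with hg
  set V : ℝ → ℝ := fun t => ∑ k, w k * kl (xb k) (x t k) with hV
  set V' : ℝ → ℝ := fun t => ∑ k, w k * ∑ i, -(xb k i * g t k i) with hV'
  have hVnonneg : ∀ t, 0 ≤ V t := by
    intro t
    apply Finset.sum_nonneg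
    intro k _
    exact mul_nonneg (hw k).le
      (kl_nonneg (fun i => (hxbpos k i).le) (hxbs k).2 (hxpos t k) (hxsum t k))
  have hgd : ∀ t k i, HasDerivAt (fun s => x s k i) (x t k i * g t k i) t := hderiv
  have hVd : ∀ t, HasDerivAt V (V' t) t := by
    intro t
    apply HasDerivAt.fun_sum
    intro k _
    have h1 : ∀ i ∈ Finset.univ, HasDerivAt
        (fun s => xb k i * Real.log (xb k i) - xb k i * Real.log (x s k i))
        (-(xb k i * g t k i)) t := by
      intro i _
      have hlog : HasDerivAt (fun s => Real.log (x s k i))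
          ((x t k i * g t k i)/(x t k i)) t :=
        (hgd t k i).log (ne_of_gt (hxpos t k i))
      have hlog' : HasDerivAt (fun s => Real.log (x s k i)) (g t k i) t := by
        have : (x t k i * g t k i)/(x t k i) = g t k i :=
          mul_div_cancel_left₀ _ (ne_of_gt (hxpos t k i))
        rwa [this] at hlog
      have hd := (hlog'.const_mul (xb k i)).const_sub (xb k i * Real.log (xb k i))
      convert hd using 1
    have h2 := HasDerivAt.fun_sum h1
    exact h2.const_mul (w k)
  -- the exponent
  set c : ℝ := Finset.univ.inf' Finset.univ_nonempty T with hc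
  have hcpos : 0 < c := by
    rw [hc, Finset.lt_inf'_iff]
    exact fun k _ => hT k
  have hcle : ∀ k, c ≤ T k := fun k => Finset.inf'_le _ (Finset.mem_univ k)
  -- the key differential inequality
  have hVV : ∀ t, V' t ≤ -c * V t := by
    intro t
    -- rewrite V' player by player
    have hk : ∀ k, ∑ i, -(xb k i * g t k i)
        = -∑ i, (xb k i - x t k i) * (r (x t) k i - T k * Real.log (x t k i)) := by
      intro k
      set cst : ℝ := (∑ j, x t k j * r (x t) k j)
        - T k * (∑ j, x t k j * Real.log (x t k j)) with hcst
      have e1 : ∀ i, -(xb k i * g t k i)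
          = -(xb k i * (r (x t) k i - T k * Real.log (x t k i))) + cst * xb k i := by
        intro i
        show -(xb k i * (r (x t) k i - (∑ j, x t k j * r (x t) k j)
          - T k * (Real.log (x t k i) - ∑ j, x t k j * Real.log (x t k j)))) = _
        rw [hcst]
        ring
      have e2 : ∑ i, x t k i * (r (x t) k i - T k * Real.log (x t k i)) = cst := by
        rw [hcst, Finset.mul_sum, ← Finset.sum_sub_distrib]
        exact Finset.sum_congr rfl (fun i _ => by ring)
      have hA : ∑ i, -(xb k i * g t k i)
          = -(∑ i, xb k i * (r (x t) k i - T k * Real.log (x t k i))) + cst := by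
        rw [Finset.sum_congr rfl (fun i _ => e1 i), Finset.sum_add_distrib,
          Finset.sum_neg_distrib, ← Finset.mul_sum, (hxbs k).2, mul_one]
      have hB : ∑ i, (xb k i - x t k i) * (r (x t) k i - T k * Real.log (x t k i))
          = (∑ i, xb k i * (r (x t) k i - T k * Real.log (x t k i)))
            - ∑ i, x t k i * (r (x t) k i - T k * Real.log (x t k i)) := by
        rw [← Finset.sum_sub_distrib]
        exact Finset.sum_congr rfl (fun i _ => by ring)
      rw [hA, hB, e2]
      ring
    -- split off the monotone part
    have hsplit : ∀ k, ∑ i, (xb k i - x t k i) * (r (x t) k i - T k * Real.log (x t k i))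
        = (∑ i, (xb k i - x t k i) * (r (x t) k i - r xb k i))
          + T k * (kl (xb k) (x t k) + kl (x t k) (xb k)) := by
      intro k
      have e1 : ∀ i, (xb k i - x t k i) * (r (x t) k i - T k * Real.log (x t k i))
          = (xb k i - x t k i) * (r (x t) k i - r xb k i)
            + T k * ((xb k i - x t k i) * (Real.log (xb k i) - Real.log (x t k i)))
            + (T k * Real.log (∑ j, Real.exp (r xb k j / T k))) * (xb k i - x t k i) := by
        intro i
        rw [hrxb k i]
        ring
      rw [Finset.sum_congr rfl (fun i _ => e1 i), Finset.sum_add_distrib,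
        Finset.sum_add_distrib, ← Finset.mul_sum, ← Finset.mul_sum,
        Finset.sum_sub_distrib, (hxbs k).2, hxsum t k]
      have e2 : ∑ i, (xb k i - x t k i) * (Real.log (xb k i) - Real.log (x t k i))
          = kl (xb k) (x t k) + kl (x t k) (xb k) := by
        rw [kl, kl, ← Finset.sum_add_distrib]
        exact Finset.sum_congr rfl (fun i _ => by ring)
      rw [e2]
      ring
    have hVheq : V' t = -(∑ k, w k * ∑ i, (xb k i - x t k i) * (r (x t) k i - r xb k i))
        - ∑ k, w k * (T k * (kl (xb k) (x t k) + kl (x t k) (xb k))) := by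
      rw [hV']
      simp only
      rw [Finset.sum_congr rfl (fun k _ => by rw [hk k, hsplit k])]
      rw [← Finset.sum_neg_distrib, ← Finset.sum_sub_distrib]
      exact Finset.sum_congr rfl (fun k _ => by ring)
    have hmono1 : 0 ≤ ∑ k, w k * ∑ i, (xb k i - x t k i) * (r (x t) k i - r xb k i) := by
      have h := hmono (x t) xb (hxsimp t) hxbs
      have he : ∀ k, ∑ i, (x t k i - xb k i) * ((- r (x t) k i) - (- r xb k i))
          = ∑ i, (xb k i - x t k i) * (r (x t) k i - r xb k i) :=
        fun k => Finset.sum_congr rfl (fun i _ => by ring)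
      rwa [Finset.sum_congr rfl (fun k _ => by rw [he k])] at h
    have hS2 : c * V t ≤ ∑ k, w k * (T k * (kl (xb k) (x t k) + kl (x t k) (xb k))) := by
      rw [hV]
      simp only
      rw [Finset.mul_sum]
      apply Finset.sum_le_sum
      intro k _
      have ha := kl_nonneg (fun i => (hxbpos k i).le) (hxbs k).2 (hxpos t k) (hxsum t k)
      have hb := kl_nonneg (fun i => (hxpos t k i).le) (hxsum t k) (hxbpos k) (hxbs k).2
      have h1 : c * (w k * kl (xb k) (x t k)) = w k * (c * kl (xb k) (x t k)) := by ring
      rw [h1]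
      apply mul_le_mul_of_nonneg_left _ (hw k).le
      have h2 : c * kl (xb k) (x t k) ≤ T k * kl (xb k) (x t k) :=
        mul_le_mul_of_nonneg_right (hcle k) ha
      nlinarith [hT k, hcle k]
    rw [hVheq]
    linarith
  -- Grönwall: t ↦ exp (c t) * V t is antitone
  set W : ℝ → ℝ := fun t => Real.exp (c*t) * V t with hW
  have hWd : ∀ t, HasDerivAt W (c * Real.exp (c*t) * V t + Real.exp (c*t) * V' t) t := by
    intro t
    have h1 : HasDerivAt (fun s : ℝ => Real.exp (c*s)) (c * Real.exp (c*t)) t := by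
      have h2 : HasDerivAt (fun s : ℝ => c*s) c t := by
        simpa using (hasDerivAt_id t).const_mul c
      simpa [mul_comm] using h2.exp
    exact h1.mul (hVd t)
  have hWanti : Antitone W := by
    apply antitone_of_deriv_nonpos
    · exact fun t => (hWd t).differentiableAt
    · intro t
      rw [(hWd t).deriv]
      have h1 := hVV t
      have h2 := Real.exp_pos (c*t)
      have h3 := hVnonneg t
      nlinarith
  have hVle : ∀ t, 0 ≤ t → V t ≤ Real.exp (-(c*t)) * W 0 := by
    intro t ht
    have h1 : W t ≤ W 0 := hWanti ht
    have h2 : V t = Real.exp (-(c*t)) * W t := by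
      rw [hW]
      simp only
      rw [← mul_assoc, ← Real.exp_add]
      simp
    rw [h2]
    exact mul_le_mul_of_nonneg_left h1 (Real.exp_pos _).le
  have hVtend : Tendsto V atTop (𝓝 0) := by
    have hbound : Tendsto (fun t => Real.exp (-(c*t)) * W 0) atTop (𝓝 0) := by
      have h1 : Tendsto (fun t : ℝ => c*t) atTop atTop :=
        Tendsto.const_mul_atTop hcpos tendsto_id
      have h2 : Tendsto (fun t : ℝ => Real.exp (-(c*t))) atTop (𝓝 0) := by
        have := Real.tendsto_exp_neg_atTop_nhds_zero.comp h1
        exact this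
      simpa using h2.mul_const (W 0)
    apply tendsto_of_tendsto_of_tendsto_of_le_of_le' tendsto_const_nhds hbound
    · exact Eventually.of_forall hVnonneg
    · filter_upwards [eventually_ge_atTop (0:ℝ)] with t ht
      exact hVle t ht
  -- conclude coordinatewise convergence
  rw [tendsto_pi_nhds]
  intro k
  rw [tendsto_pi_nhds]
  intro i
  have hsqle : ∀ t, (x t k i - xb k i)^2 ≤ (2/(w k)) * V t := by
    intro t
    have h1 := kl_ge_sq' (fun j => (hxbpos k j).le) (hxbs k).2 (hxpos t k) (hxsum t k)
    have h2 : (xb k i - x t k i)^2 ≤ ∑ j, (xb k j - x t k j)^2 :=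
      Finset.single_le_sum (f := fun j => (xb k j - x t k j)^2)
        (fun j _ => sq_nonneg _) (Finset.mem_univ i)
    have h3 : w k * kl (xb k) (x t k) ≤ V t := by
      rw [hV]
      simp only
      apply Finset.single_le_sum (f := fun k => w k * kl (xb k) (x t k)) _ (Finset.mem_univ k)
      intro k' _
      exact mul_nonneg (hw k').le
        (kl_nonneg (fun j => (hxbpos k' j).le) (hxbs k').2 (hxpos t k') (hxsum t k'))
    have h4 : (xb k i - x t k i)^2 ≤ 2 * kl (xb k) (x t k) := by linarith
    have h5 : kl (xb k) (x t k) ≤ V t / w k := by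
      rw [le_div_iff₀ (hw k)]
      calc kl (xb k) (x t k) * w k = w k * kl (xb k) (x t k) := by ring
        _ ≤ V t := h3
    have h6 : (x t k i - xb k i)^2 = (xb k i - x t k i)^2 := by ring
    rw [h6]
    calc (xb k i - x t k i)^2 ≤ 2 * kl (xb k) (x t k) := h4
      _ ≤ 2 * (V t / w k) := by linarith
      _ = (2/(w k)) * V t := by ring
  have habs : ∀ t, |x t k i - xb k i| ≤ Real.sqrt ((2/(w k)) * V t) := by
    intro t
    rw [← Real.sqrt_sq_eq_abs]
    exact Real.sqrt_le_sqrt (hsqle t)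
  have hsqrt : Tendsto (fun t => Real.sqrt ((2/(w k)) * V t)) atTop (𝓝 0) := by
    have h1 : Tendsto (fun t => (2/(w k)) * V t) atTop (𝓝 0) := by
      simpa using hVtend.const_mul (2/(w k))
    have := (Real.continuous_sqrt.tendsto 0).comp h1
    simpa [Function.comp_def] using this
  rw [tendsto_iff_dist_tendsto_zero]
  apply tendsto_of_tendsto_of_tendsto_of_le_of_le' tendsto_const_nhds hsqrt
  · exact Eventually.of_forall (fun t => dist_nonneg)
  · apply Eventually.of_forall
    intro t
    rw [Real.dist_eq]
    exact habs t


end AuxQRE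

theorem Q_learning_converges_in_weighted_monotone_games
    {N : ℕ} {n : Fin N → ℕ} (hn : ∀ k, 0 < n k)
    (r : Strat n → Strat n)
    -- the rewards (hence the pseudo-gradient F = (−r_k)_k) are continuous on Δ
    (hr : ContinuousOn r {z | JointSimplex z})
    -- Γ is weighted monotone: ⟨x − y, F(x; w) − F(y; w)⟩ ≥ 0 on Δ, F_k = −r_k
    (w : Fin N → ℝ) (hw : ∀ k, 0 < w k)
    (hmono : ∀ x y : Strat n, JointSimplex x → JointSimplex y →
      0 ≤ ∑ k, w k * ∑ i, (x k i - y k i) * ((- r x k i) - (- r y k i)))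
    (T : Fin N → ℝ) (hT : ∀ k, 0 < T k) :
    ∃ xbar : Strat n, IsQRE r T xbar ∧
      (∀ y, IsQRE r T y → y = xbar) ∧
      ∀ x : ℝ → Strat n, QLSolution r T x → Tendsto x atTop (𝓝 xbar) := by

  rcases Nat.eq_zero_or_pos N with hN0 | hN
  · subst hN0
    refine ⟨fun k => Fin.elim0 k, ⟨fun k => Fin.elim0 k, fun k => Fin.elim0 k⟩,
      fun y _ => funext (fun k => Fin.elim0 k), ?_⟩
    intro x _
    have hx : x = fun _ => (fun k => Fin.elim0 k : Strat n) :=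
      funext (fun t => funext (fun k => Fin.elim0 k))
    rw [hx]
    exact tendsto_const_nhds
  · obtain ⟨xb, hxbs, hxbf⟩ := qre_exists hN hn r hr T w hT hw hmono
    refine ⟨xb, ⟨hxbs, hxbf⟩, ?_, ?_⟩
    · intro y hy
      exact qre_unique r T w hT hw hmono y xb hy.1 hxbs hy.2 hxbf
    · intro x hx
      exact ql_converges hN r T w hT hw hmono xb hxbs hxbf x hx.1 hx.2
end
end
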